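/- arXiv:2209.11627 — 3 statements merged into one kernel-verified Lean document; each statement's English description precedes it below -/
import Mathlib

section
/- If X is a resolving subcategory of A-mod, then for every natural number n the full subcategory X^{≤n} of modules with X-resolution dimension at most n is also a resolving subcategory of A-mod, and so is the subcategory X^{<∞} of modules with finite X-resolution dimension. -/
open CategoryTheory

section Core

variable (A : Type) [Ring A]

/-- A short exact sequence of `A`-modules, given by two composable morphisms. -/
def IsSES {X Y Z : ModuleCat A} (f : X ⟶ Y) (g : Y ⟶ Z) : Prop :=
  Function.Injective f ∧ Function.Exact f g ∧ Function.Surjective g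

/-- The class of finitely generated projective `A`-modules. -/
def projClass : Set (ModuleCat A) :=
  {M | Module.Finite A M ∧ Module.Projective A M}

/-- A resolving subcategory of the category of finitely generated `A`-modules:
it consists of finitely generated modules, contains all finitely generated projective modules,
and is closed under isomorphisms, extensions and kernels of epimorphisms. -/
structure IsResolving (C : Set (ModuleCat A)) : Prop where
  fg : ∀ M ∈ C, Module.Finite A M
  proj_mem : ∀ M : ModuleCat A, Module.Finite A M → Module.Projective A M → M ∈ C
  iso_closed : ∀ M N : ModuleCat A, Nonempty (M ≅ N) → M ∈ C → N ∈ C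
  ext_closed : ∀ (X Y Z : ModuleCat A) (f : X ⟶ Y) (g : Y ⟶ Z),
      IsSES A f g → X ∈ C → Z ∈ C → Y ∈ C
  ker_closed : ∀ (X Y Z : ModuleCat A) (f : X ⟶ Y) (g : Y ⟶ Z),
      IsSES A f g → Y ∈ C → Z ∈ C → X ∈ C

/-- A `C`-resolution `⋯ → X 1 → X 0 → M → 0` of `M`:
an exact sequence with all terms in `C`. -/
structure Resolution (C : Set (ModuleCat A)) (M : ModuleCat A) where
  X : ℕ → ModuleCat A
  mem : ∀ i, X i ∈ C
  d : ∀ i, X (i + 1) ⟶ X i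
  ε : X 0 ⟶ M
  surj : Function.Surjective ε
  exact_zero : Function.Exact (d 0) ε
  exact_succ : ∀ i, Function.Exact (d (i + 1)) (d i)

/-- The `n`-th syzygy of `M` with respect to a given resolution:
`syzygy 0 = M` and `syzygy (n+1) = Im (d n) = Ker (X n → X (n-1))`. -/
def Resolution.syzygy {C : Set (ModuleCat A)} {M : ModuleCat A}
    (r : Resolution A C M) : ℕ → ModuleCat A
  | 0 => M
  | n + 1 => ModuleCat.of A (LinearMap.range (r.d n).hom)

/-- `M` has `C`-resolution dimension at most `n`: there is a `C`-resolution of `M`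
which vanishes in degrees `> n`. -/
def resDimLE (C : Set (ModuleCat A)) (M : ModuleCat A) (n : ℕ) : Prop :=
  ∃ r : Resolution A C M, ∀ i, n < i → Limits.IsZero (r.X i)

/-- `Ext_A^j(M, N) = 0` for all `j ≥ k` (with `k ≥ 1`), expressed via the vanishing of the
cohomology of `Hom(P_•, N)` for every projective resolution `P_•` of `M`. -/
def extVanishFrom (M N : ModuleCat A) (k : ℕ) : Prop :=
  ∀ r : Resolution A (projClass A) M, ∀ i : ℕ, k ≤ i + 1 →
    Function.Exact (fun g : r.X i ⟶ N => r.d i ≫ g)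
      (fun g : r.X (i + 1) ⟶ N => r.d (i + 1) ≫ g)

/-- `Ext_A^j(M, N) = 0` for all `j ≥ 1`. -/
def extVanish (M N : ModuleCat A) : Prop := extVanishFrom A M N 1

/-- `Ext_A^1(M, N) = 0`. -/
def ext1Vanish (M N : ModuleCat A) : Prop :=
  ∀ r : Resolution A (projClass A) M,
    Function.Exact (fun g : r.X 0 ⟶ N => r.d 0 ≫ g)
      (fun g : r.X 1 ⟶ N => r.d 1 ≫ g)

/-- `add T`: direct summands of finite direct sums of copies of `T`. -/
def addClass (T : ModuleCat A) : Set (ModuleCat A) :=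
  {M | ∃ (n : ℕ) (s : M ⟶ ModuleCat.of A (Fin n → T))
        (p : ModuleCat.of A (Fin n → T) ⟶ M), s ≫ p = 𝟙 M}

/-- A `D`-coresolution `0 → M → X 0 → X 1 → ⋯` of `M`. -/
structure Coresolution (D : Set (ModuleCat A)) (M : ModuleCat A) where
  X : ℕ → ModuleCat A
  mem : ∀ i, X i ∈ D
  η : M ⟶ X 0
  d : ∀ i, X i ⟶ X (i + 1)
  inj : Function.Injective η
  exact_zero : Function.Exact η (d 0)
  exact_succ : ∀ i, Function.Exact (d i) (d (i + 1))

/-- The coresolution stays exact after applying `Hom_A(-, T)`. -/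
def Coresolution.HomExact {D : Set (ModuleCat A)} {M : ModuleCat A}
    (c : Coresolution A D M) (T : ModuleCat A) : Prop :=
  Function.Surjective (fun g : c.X 0 ⟶ T => c.η ≫ g) ∧
  Function.Exact (fun g : c.X 1 ⟶ T => c.d 0 ≫ g) (fun g : c.X 0 ⟶ T => c.η ≫ g) ∧
  ∀ i, Function.Exact (fun g : c.X (i + 1 + 1) ⟶ T => c.d (i + 1) ≫ g)
        (fun g : c.X (i + 1) ⟶ T => c.d i ≫ g)

/-- `cogen*(T)`: modules admitting an `add T`-coresolution which stays exact
under `Hom_A(-, T)`. -/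
def cogenStar (T : ModuleCat A) : Set (ModuleCat A) :=
  {M | ∃ c : Coresolution A (addClass A T) M, c.HomExact A T}

/-- `W(T) = ^⊥T ∩ cogen*(T)`. -/
def WClass (T : ModuleCat A) : Set (ModuleCat A) :=
  {M | extVanish A M T ∧ M ∈ cogenStar A T}

/-- `T` is a Wakamatsu tilting `A`-module. -/
def IsWakamatsuTilting (T : ModuleCat A) : Prop :=
  Module.Finite A T ∧ (ModuleCat.of A A) ∈ WClass A T ∧ T ∈ WClass A T

/-- A complete projective resolution (totally acyclic complex of finitely generated
projective modules). -/
structure TotallyAcyclic where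
  P : ℤ → ModuleCat A
  fg : ∀ i, Module.Finite A (P i)
  proj : ∀ i, Module.Projective A (P i)
  d : ∀ i, P i ⟶ P (i + 1)
  exact : ∀ i, Function.Exact (d i) (d (i + 1))
  homExact : ∀ i, Function.Exact
      (fun g : P (i + 1 + 1) ⟶ ModuleCat.of A A => d (i + 1) ≫ g)
      (fun g : P (i + 1) ⟶ ModuleCat.of A A => d i ≫ g)

/-- `M` is Gorenstein-projective: `M` is an image in a totally acyclic complex of
projectives. -/
def GorensteinProj (M : ModuleCat A) : Prop :=
  ∃ (c : TotallyAcyclic A) (i : ℤ),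
    Nonempty (M ≅ ModuleCat.of A (LinearMap.range (c.d i).hom))

/-- The class of finitely generated Gorenstein-projective modules. -/
def GPclass : Set (ModuleCat A) := {M | GorensteinProj A M}

/-- Gorenstein-projective dimension at most `n`. -/
def GPdimLE (M : ModuleCat A) (n : ℕ) : Prop := resDimLE A (GPclass A) M n

/-- The class of semi-Gorenstein-projective modules: finitely generated `M` with
`Ext^i(M, A) = 0` for all `i ≥ 1`. -/
def SGPclass : Set (ModuleCat A) :=
  {M | Module.Finite A M ∧ extVanish A M (ModuleCat.of A A)}

/-- `T` is a tilting module of projective dimension at most `ℓ`. -/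
def IsTiltingOfDim (T : ModuleCat A) (ℓ : ℕ) : Prop :=
  Module.Finite A T ∧ resDimLE A (projClass A) T ℓ ∧ extVanish A T T ∧
  ∃ c : Coresolution A (addClass A T) (ModuleCat.of A A),
    ∀ i, ℓ < i → Limits.IsZero (c.X i)

end Core

namespace Stmt1Aux
variable {A : Type} [Ring A] {C : Set (ModuleCat A)}

/-- `C`-resolution dimension at most `n`, defined by peeling off one syzygy at a time. -/
def dimLE (C : Set (ModuleCat A)) : ℕ → ModuleCat A → Prop
  | 0 => fun M => M ∈ C
  | n+1 => fun M => ∃ (K G : ModuleCat A) (f : K ⟶ G) (g : G ⟶ M),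
      IsSES A f g ∧ G ∈ C ∧ dimLE C n K

abbrev Z0 (A : Type) [Ring A] : ModuleCat A := ModuleCat.of A PUnit

lemma zero_mem (hC : IsResolving A C) : Z0 A ∈ C :=
  hC.proj_mem _ inferInstance inferInstance

lemma ses_id (hC : IsResolving A C) (M : ModuleCat A) :
    IsSES A (0 : Z0 A ⟶ M) (𝟙 M) := by
  refine ⟨fun a b _ => Subsingleton.elim a b, ?_, fun y => ⟨y, rfl⟩⟩
  rw [LinearMap.exact_iff]
  show LinearMap.ker (ModuleCat.Hom.hom (𝟙 M)) = LinearMap.range (ModuleCat.Hom.hom (0 : Z0 A ⟶ M))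
  simp

lemma dimLE_succ_of (hC : IsResolving A C) {M : ModuleCat A} {n : ℕ}
    (h : dimLE C n M) : dimLE C (n+1) M := by
  induction n generalizing M with
  | zero => exact ⟨Z0 A, M, 0, 𝟙 M, ses_id hC M, h, zero_mem hC⟩
  | succ n ih =>
    obtain ⟨K, G, f, g, hs, hG, hK⟩ := h
    exact ⟨K, G, f, g, hs, hG, ih hK⟩

lemma dimLE_mono (hC : IsResolving A C) {M : ModuleCat A} {m n : ℕ} (h : m ≤ n)
    (hM : dimLE C m M) : dimLE C n M := by
  induction n with
  | zero => rwa [Nat.le_zero.mp h] at hM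
  | succ n ih =>
    rcases Nat.lt_or_ge m (n+1) with h' | h'
    · exact dimLE_succ_of hC (ih (Nat.lt_succ_iff.mp h'))
    · rwa [Nat.le_antisymm h h'] at hM

lemma dimLE_fg (hC : IsResolving A C) {M : ModuleCat A} {n : ℕ} (h : dimLE C n M) :
    Module.Finite A M := by
  cases n with
  | zero => exact hC.fg M h
  | succ n =>
    obtain ⟨K, G, f, g, hs, hG, hK⟩ := h
    have := hC.fg G hG
    exact Module.Finite.of_surjective g.hom hs.2.2

lemma dimLE_iso (hC : IsResolving A C) {M N : ModuleCat A} (e : M ≅ N) {n : ℕ}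
    (h : dimLE C n M) : dimLE C n N := by
  induction n generalizing M N with
  | zero => exact hC.iso_closed M N ⟨e⟩ h
  | succ n ih =>
    obtain ⟨K, G, f, g, ⟨hinj, hex, hsurj⟩, hG, hK⟩ := h
    refine ⟨K, G, f, g ≫ e.hom, ⟨hinj, ?_, ?_⟩, hG, hK⟩
    · rw [LinearMap.exact_iff] at hex ⊢
      have h1 : LinearMap.ker e.hom.hom = ⊥ :=
        LinearMap.ker_eq_bot.mpr (fun a b hab => e.toLinearEquiv.injective hab)
      show LinearMap.ker (e.hom.hom.comp g.hom) = _
      rw [LinearMap.ker_comp, h1, Submodule.comap_bot, hex]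
    · exact e.toLinearEquiv.surjective.comp hsurj

/-- A surjection with source and target of bounded dimension. -/
lemma ses_iso_kernel {X Y Z : ModuleCat A} {f : X ⟶ Y} {g : Y ⟶ Z} (h : IsSES A f g) :
    Nonempty (X ≅ ModuleCat.of A (LinearMap.ker g.hom)) := by
  have hker : LinearMap.ker g.hom = LinearMap.range f.hom := LinearMap.exact_iff.mp h.2.1
  exact ⟨((LinearEquiv.ofInjective f.hom h.1).trans
    (LinearEquiv.ofEq _ _ hker.symm)).toModuleIso⟩

lemma ker_ses {Y Z : ModuleCat A} (g : Y ⟶ Z) (hg : Function.Surjective g) :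
    IsSES A (show ModuleCat.of A (LinearMap.ker g.hom) ⟶ Y from ModuleCat.ofHom (LinearMap.ker g.hom).subtype) g := by
  refine ⟨Subtype.coe_injective, ?_, hg⟩
  rw [LinearMap.exact_iff]
  exact (Submodule.range_subtype _).symm

lemma exists_proj_epi (hC : IsResolving A C) (M : ModuleCat A) (hM : Module.Finite A M) :
    ∃ (P : ModuleCat A) (π : P ⟶ M), P ∈ C ∧ Module.Projective A P ∧ Function.Surjective π := by
  haveI := hM
  obtain ⟨k, fmap, hf⟩ := Module.Finite.exists_fin' A M
  exact ⟨ModuleCat.of A (ULift (Fin k → A)),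
    show ModuleCat.of A (ULift (Fin k → A)) ⟶ M from ModuleCat.ofHom (fmap.comp ULift.moduleEquiv.toLinearMap),
    hC.proj_mem _ (show Module.Finite A (ULift (Fin k → A)) from inferInstance)
      (show Module.Projective A (ULift (Fin k → A)) from inferInstance),
    (show Module.Projective A (ULift (Fin k → A)) from inferInstance),
    hf.comp ULift.moduleEquiv.surjective⟩

lemma pullback_ses {Y Z Q : ModuleCat A} (g1 : Y ⟶ Z) (g2 : Q ⟶ Z)
    (h1 : Function.Surjective g1) (h2 : Function.Surjective g2) :
    ∃ (E : ModuleCat A) (π1 : E ⟶ Y) (π2 : E ⟶ Q)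
      (k1 : ModuleCat.of A (LinearMap.ker g2.hom) ⟶ E)
      (k2 : ModuleCat.of A (LinearMap.ker g1.hom) ⟶ E),
      IsSES A k1 π1 ∧ IsSES A k2 π2 := by
  set φ : (↥Y × ↥Q) →ₗ[A] ↥Z := g1.hom.comp (LinearMap.fst A ↥Y ↥Q) -
    g2.hom.comp (LinearMap.snd A ↥Y ↥Q) with hφ
  have hφ_apply : ∀ p : ↥Y × ↥Q, φ p = g1 p.1 - g2 p.2 := fun p => rfl
  have hmem : ∀ p : ↥Y × ↥Q, p ∈ LinearMap.ker φ ↔ g1 p.1 = g2 p.2 := by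
    intro p; rw [LinearMap.mem_ker, hφ_apply, sub_eq_zero]
  refine ⟨ModuleCat.of A (LinearMap.ker φ),
    show ModuleCat.of A (LinearMap.ker φ) ⟶ Y from
      ModuleCat.ofHom ((LinearMap.fst A ↥Y ↥Q).comp (LinearMap.ker φ).subtype),
    show ModuleCat.of A (LinearMap.ker φ) ⟶ Q from
      ModuleCat.ofHom ((LinearMap.snd A ↥Y ↥Q).comp (LinearMap.ker φ).subtype),
    show ModuleCat.of A (LinearMap.ker g2.hom) ⟶ ModuleCat.of A (LinearMap.ker φ) from
      ModuleCat.ofHom <| LinearMap.codRestrict (LinearMap.ker φ)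
        ((LinearMap.inr A ↥Y ↥Q).comp (LinearMap.ker g2.hom).subtype)
        (fun q => (hmem _).mpr (by simp only [LinearMap.coe_comp, Function.comp_apply, LinearMap.coe_inr, map_zero]; exact (LinearMap.mem_ker.mp q.2).symm)),
    show ModuleCat.of A (LinearMap.ker g1.hom) ⟶ ModuleCat.of A (LinearMap.ker φ) from
      ModuleCat.ofHom <| LinearMap.codRestrict (LinearMap.ker φ)
        ((LinearMap.inl A ↥Y ↥Q).comp (LinearMap.ker g1.hom).subtype)
        (fun y => (hmem _).mpr (by simp only [LinearMap.coe_comp, Function.comp_apply, LinearMap.coe_inl, map_zero]; exact LinearMap.mem_ker.mp y.2)),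
    ⟨?_, ?_, ?_⟩, ⟨?_, ?_, ?_⟩⟩
  · intro a b hab
    exact Subtype.ext (congrArg (fun x : LinearMap.ker φ => (x : ↥Y × ↥Q).2) hab)
  · rintro ⟨⟨y, q⟩, he⟩
    constructor
    · intro h0
      have hy : y = 0 := h0
      have hq : g2 q = 0 := by
        have := (hmem _).mp he
        rw [hy, map_zero] at this; exact this.symm
      exact ⟨⟨q, LinearMap.mem_ker.mpr hq⟩,
        Subtype.ext (Prod.ext_iff.mpr ⟨hy.symm, rfl⟩)⟩
    · rintro ⟨q, hq⟩
      rw [← hq]; rfl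
  · intro y
    obtain ⟨q, hq⟩ := h2 (g1 y)
    exact ⟨⟨(y, q), (hmem _).mpr hq.symm⟩, rfl⟩
  · intro a b hab
    exact Subtype.ext (congrArg (fun x : LinearMap.ker φ => (x : ↥Y × ↥Q).1) hab)
  · rintro ⟨⟨y, q⟩, he⟩
    constructor
    · intro h0
      have hq : q = 0 := h0
      have hy : g1 y = 0 := by
        have := (hmem _).mp he
        rw [hq, map_zero] at this; exact this
      exact ⟨⟨y, LinearMap.mem_ker.mpr hy⟩,
        Subtype.ext (Prod.ext_iff.mpr ⟨rfl, hq.symm⟩)⟩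
    · rintro ⟨q, hq⟩
      rw [← hq]; rfl
  · intro q
    obtain ⟨y, hy⟩ := h1 (g2 q)
    exact ⟨⟨(y, q), (hmem _).mpr hy⟩, rfl⟩

lemma EK (hC : IsResolving A C) : ∀ n : ℕ,
    (∀ (X Y Z : ModuleCat A) (f : X ⟶ Y) (g : Y ⟶ Z), IsSES A f g →
       dimLE C n X → dimLE C n Z → dimLE C n Y) ∧
    (∀ (X Y Z : ModuleCat A) (f : X ⟶ Y) (g : Y ⟶ Z), IsSES A f g →
       dimLE C n Y → dimLE C n Z → dimLE C n X) := by
  intro n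
  induction n with
  | zero =>
    exact ⟨fun X Y Z f g hs hX hZ => hC.ext_closed X Y Z f g hs hX hZ,
      fun X Y Z f g hs hY hZ => hC.ker_closed X Y Z f g hs hY hZ⟩
  | succ n ih =>
    obtain ⟨En, Kn⟩ := ih
    -- Syzygy lemma
    have Sn : ∀ (M G : ModuleCat A) (p : G ⟶ M), G ∈ C → Function.Surjective p →
        dimLE C (n+1) M → dimLE C n (ModuleCat.of A (LinearMap.ker p.hom)) := by
      intro M G p hG hp hM
      obtain ⟨K', G', f', g', hs', hG', hK'⟩ := hM
      obtain ⟨E, π1, π2, k1, k2, hses1, hses2⟩ := pullback_ses p g' hp hs'.2.2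
      have hkerg' : dimLE C n (ModuleCat.of A (LinearMap.ker g'.hom)) := by
        obtain ⟨e⟩ := ses_iso_kernel hs'
        exact dimLE_iso hC e hK'
      have hE : dimLE C n E :=
        En _ _ _ k1 π1 hses1 hkerg' (dimLE_mono hC (Nat.zero_le n) hG)
      exact Kn _ _ _ k2 π2 hses2 hE (dimLE_mono hC (Nat.zero_le n) hG')
    -- Horseshoe: extension closure at level n+1
    have Esucc : ∀ (X Y Z : ModuleCat A) (f : X ⟶ Y) (g : Y ⟶ Z), IsSES A f g →
        dimLE C (n+1) X → dimLE C (n+1) Z → dimLE C (n+1) Y := by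
      intro X Y Z f g hs hX hZ
      obtain ⟨P, πX, hPC, hPproj, hπX⟩ := exists_proj_epi hC X (dimLE_fg hC hX)
      obtain ⟨Q, πZ, hQC, hQproj, hπZ⟩ := exists_proj_epi hC Z (dimLE_fg hC hZ)
      have hΩX : dimLE C n (ModuleCat.of A (LinearMap.ker πX.hom)) := Sn X P πX hPC hπX hX
      have hΩZ : dimLE C n (ModuleCat.of A (LinearMap.ker πZ.hom)) := Sn Z Q πZ hQC hπZ hZ
      haveI := hQproj
      obtain ⟨h, hh⟩ :=
        Module.projective_lifting_property g.hom πZ.hom hs.2.2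
      set π : (↥P × ↥Q) →ₗ[A] ↥Y :=
        (f.hom.comp (πX.hom.comp (LinearMap.fst A ↥P ↥Q))) +
          h.comp (LinearMap.snd A ↥P ↥Q) with hπdef
      have hπ_apply : ∀ p : ↥P × ↥Q, π p = f (πX p.1) + h p.2 := fun p => rfl
      have hgh : ∀ b : ↥Q, g (h b) = πZ b := fun b => LinearMap.congr_fun hh b
      have hgf : ∀ x : ↥X, g (f x) = 0 := fun x => (hs.2.1 (f x)).mpr ⟨x, rfl⟩
      have hπsurj : Function.Surjective π := by
        intro y
        obtain ⟨b, hb⟩ := hπZ (g y)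
        have h0 : g (y - h b) = 0 := by rw [map_sub, hgh, hb, sub_self]
        obtain ⟨x, hx⟩ := (hs.2.1 (y - h b)).mp h0
        obtain ⟨a, ha⟩ := hπX x
        refine ⟨(a, b), ?_⟩
        rw [hπ_apply]
        dsimp only
        rw [ha, hx]
        abel
      refine ⟨ModuleCat.of A (LinearMap.ker π), ModuleCat.of A (↥P × ↥Q),
        show ModuleCat.of A (LinearMap.ker π) ⟶ ModuleCat.of A (↥P × ↥Q) from
          ModuleCat.ofHom (LinearMap.ker π).subtype,
        show ModuleCat.of A (↥P × ↥Q) ⟶ Y from ModuleCat.ofHom π,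
        ⟨Subtype.coe_injective, ?_, hπsurj⟩, ?_, ?_⟩
      · rw [LinearMap.exact_iff]
        exact (Submodule.range_subtype _).symm
      · haveI := hC.fg P hPC
        haveI := hC.fg Q hQC
        haveI := hPproj
        exact hC.proj_mem _ (show Module.Finite A (↥P × ↥Q) from inferInstance)
          (show Module.Projective A (↥P × ↥Q) from inferInstance)
      · -- dimLE C n (ker π) via horseshoe kernel sequence
        have hjmem : ∀ a : LinearMap.ker πX.hom, ((a : ↥P), (0 : ↥Q)) ∈ LinearMap.ker π := by
          intro a
          rw [LinearMap.mem_ker, hπ_apply]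
          dsimp only
          rw [LinearMap.mem_ker.mp a.2, map_zero, map_zero, add_zero]
        have hqmem : ∀ w : LinearMap.ker π, (w : ↥P × ↥Q).2 ∈ LinearMap.ker πZ.hom := by
          intro w
          have hw : f (πX (w : ↥P × ↥Q).1) + h (w : ↥P × ↥Q).2 = 0 := by
            rw [← hπ_apply]
            exact LinearMap.mem_ker.mp w.2
          have hneg : h (w : ↥P × ↥Q).2 = - f (πX (w : ↥P × ↥Q).1) := by
            rw [eq_neg_iff_add_eq_zero, add_comm]
            exact hw
          rw [LinearMap.mem_ker, ← hgh, hneg, map_neg, hgf, neg_zero]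
        refine En (ModuleCat.of A (LinearMap.ker πX.hom)) (ModuleCat.of A (LinearMap.ker π))
          (ModuleCat.of A (LinearMap.ker πZ.hom))
          (show ModuleCat.of A (LinearMap.ker πX.hom) ⟶ ModuleCat.of A (LinearMap.ker π) from
            ModuleCat.ofHom <| LinearMap.codRestrict (LinearMap.ker π)
              ((LinearMap.inl A ↥P ↥Q).comp (LinearMap.ker πX.hom).subtype) hjmem)
          (show ModuleCat.of A (LinearMap.ker π) ⟶ ModuleCat.of A (LinearMap.ker πZ.hom) from
            ModuleCat.ofHom <| LinearMap.codRestrict (LinearMap.ker πZ.hom)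
              ((LinearMap.snd A ↥P ↥Q).comp (LinearMap.ker π).subtype) hqmem)
          ⟨?_, ?_, ?_⟩ hΩX hΩZ
        · intro a b hab
          have h1 := congrArg (fun w : LinearMap.ker π => (w : ↥P × ↥Q).1) hab
          exact Subtype.ext h1
        · rintro ⟨⟨a, b⟩, he⟩
          constructor
          · intro h0
            have hb : b = 0 := Subtype.ext_iff.mp h0
            have hfa : f (πX a) = 0 := by
              have h2 := LinearMap.mem_ker.mp he
              rw [hπ_apply] at h2
              dsimp only at h2
              rwa [hb, map_zero, add_zero] at h2
            have hπXa : πX a = 0 := hs.1 (by rw [hfa, map_zero])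
            exact ⟨⟨a, LinearMap.mem_ker.mpr hπXa⟩,
              Subtype.ext (Prod.ext_iff.mpr ⟨rfl, hb.symm⟩)⟩
          · rintro ⟨a, ha⟩
            rw [← ha]
            rfl
        · rintro ⟨b, hb⟩
          have h1 : g (h b) = 0 := by rw [hgh]; exact LinearMap.mem_ker.mp hb
          obtain ⟨x, hx⟩ := (hs.2.1 (h b)).mp h1
          obtain ⟨a, ha⟩ := hπX (-x)
          have hmem2 : ((a, b) : ↥P × ↥Q) ∈ LinearMap.ker π := by
            rw [LinearMap.mem_ker, hπ_apply]
            dsimp only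
            rw [ha, map_neg, hx]
            abel
          exact ⟨⟨(a, b), hmem2⟩, rfl⟩
    -- Kernel closure, special case: quotient in C
    have K0 : ∀ (X Y Z : ModuleCat A) (f : X ⟶ Y) (g : Y ⟶ Z), IsSES A f g →
        dimLE C (n+1) Y → Z ∈ C → dimLE C (n+1) X := by
      intro X Y Z f g hs hY hZ
      obtain ⟨K', G', f', g', hs', hG', hK'⟩ := hY
      have hgf : ∀ x : ↥X, g (f x) = 0 := fun x => (hs.2.1 (f x)).mpr ⟨x, rfl⟩
      set ρ : G' ⟶ Z := g' ≫ g with hρ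
      have hρ_apply : ∀ u : ↥G', ρ u = g (g' u) := fun u => rfl
      have hρs : Function.Surjective ρ := by
        intro z
        obtain ⟨y, hy⟩ := hs.2.2 z
        obtain ⟨u, hu⟩ := hs'.2.2 y
        exact ⟨u, by rw [hρ_apply, hu, hy]⟩
      have hVC : ModuleCat.of A (LinearMap.ker ρ.hom) ∈ C :=
        hC.ker_closed _ G' Z _ ρ (ker_ses ρ hρs) hG' hZ
      set e := LinearEquiv.ofInjective f.hom hs.1 with he
      have hg'mem : ∀ v : LinearMap.ker ρ.hom, g' (v : ↥G') ∈ LinearMap.range f.hom := by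
        intro v
        have h0 : g (g' (v : ↥G')) = 0 := by
          rw [← hρ_apply]
          exact LinearMap.mem_ker.mp v.2
        obtain ⟨x, hx⟩ := (hs.2.1 _).mp h0
        exact ⟨x, hx⟩
      set qlin : ↥(LinearMap.ker ρ.hom) →ₗ[A] ↥X := e.symm.toLinearMap.comp
        (LinearMap.codRestrict (LinearMap.range f.hom)
          (g'.hom.comp (LinearMap.ker ρ.hom).subtype) hg'mem) with hqlin
      have hq_apply : ∀ v : LinearMap.ker ρ.hom, f (qlin v) = g' (v : ↥G') := by
        intro v
        have h2 : ((e (qlin v)) : ↥Y) = f (qlin v) :=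
          LinearEquiv.ofInjective_apply f.hom (qlin v)
        rw [← h2]
        show ((e (e.symm ⟨g' (v : ↥G'), hg'mem v⟩)) : ↥Y) = g' (v : ↥G')
        rw [e.apply_symm_apply]
      have hqsurj : Function.Surjective qlin := by
        intro x
        obtain ⟨u, hu⟩ := hs'.2.2 (f x)
        have hmemu : u ∈ LinearMap.ker ρ.hom := by
          rw [LinearMap.mem_ker, hρ_apply, hu]
          exact hgf x
        refine ⟨⟨u, hmemu⟩, hs.1 ?_⟩
        rw [hq_apply]
        exact hu
      have hle : LinearMap.ker g'.hom ≤ LinearMap.ker ρ.hom := by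
        intro u hu
        rw [LinearMap.mem_ker] at hu ⊢
        rw [hρ_apply, hu, map_zero]
      have hinj : Function.Injective (Submodule.inclusion hle) := Submodule.inclusion_injective hle
      have hexact : Function.Exact (Submodule.inclusion hle) qlin := by
        intro v
        constructor
        · intro hv
          have hg'v : g' (v : ↥G') = 0 := by
            rw [← hq_apply v, hv, map_zero]
          exact ⟨⟨(v : ↥G'), LinearMap.mem_ker.mpr hg'v⟩, Subtype.ext rfl⟩
        · rintro ⟨u, hu⟩
          apply hs.1
          rw [map_zero, ← hu, hq_apply]
          exact LinearMap.mem_ker.mp u.2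
      refine ⟨ModuleCat.of A (LinearMap.ker g'.hom), ModuleCat.of A (LinearMap.ker ρ.hom),
        show ModuleCat.of A (LinearMap.ker g'.hom) ⟶ ModuleCat.of A (LinearMap.ker ρ.hom) from
          ModuleCat.ofHom (Submodule.inclusion hle),
        show ModuleCat.of A (LinearMap.ker ρ.hom) ⟶ X from ModuleCat.ofHom qlin,
        ⟨hinj, hexact, hqsurj⟩, hVC, ?_⟩
      · obtain ⟨eiso⟩ := ses_iso_kernel hs'
        exact dimLE_iso hC eiso hK'
    -- Kernel closure in general
    have Ksucc : ∀ (X Y Z : ModuleCat A) (f : X ⟶ Y) (g : Y ⟶ Z), IsSES A f g →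
        dimLE C (n+1) Y → dimLE C (n+1) Z → dimLE C (n+1) X := by
      intro X Y Z f g hs hY hZ
      obtain ⟨KZ, Q, fZ, gZ, hsZ, hQC, hKZ⟩ := hZ
      obtain ⟨E, π1, π2, k1, k2, hses1, hses2⟩ := pullback_ses g gZ hs.2.2 hsZ.2.2
      have h1 : dimLE C (n+1) (ModuleCat.of A (LinearMap.ker gZ.hom)) := by
        obtain ⟨eiso⟩ := ses_iso_kernel hsZ
        exact dimLE_mono hC (Nat.le_succ n) (dimLE_iso hC eiso hKZ)
      have hE : dimLE C (n+1) E := Esucc _ _ _ k1 π1 hses1 h1 hY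
      have h2 : dimLE C (n+1) (ModuleCat.of A (LinearMap.ker g.hom)) :=
        K0 _ E Q k2 π2 hses2 hE hQC
      obtain ⟨eiso⟩ := ses_iso_kernel hs
      exact dimLE_iso hC eiso.symm h2
    exact ⟨Esucc, Ksucc⟩

lemma dimLE_of_resDim (hC : IsResolving A C) {M : ModuleCat A} {n : ℕ}
    (h : resDimLE A C M n) : dimLE C n M := by
  induction n generalizing M with
  | zero =>
    obtain ⟨r, hz⟩ := h
    have h1 : (𝟙 (r.X 1) : r.X 1 ⟶ r.X 1) = 0 := (hz 1 Nat.one_pos).eq_of_src _ _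
    have hss : ∀ a : r.X 1, a = 0 := by
      intro a
      calc a = (𝟙 (r.X 1) : r.X 1 ⟶ r.X 1) a := rfl
        _ = (0 : r.X 1 ⟶ r.X 1) a := by rw [h1]
        _ = 0 := rfl
    have hinj : Function.Injective r.ε := by
      intro a b hab
      have hsub : r.ε (a - b) = 0 := by rw [map_sub, hab, sub_self]
      obtain ⟨x, hx⟩ := (r.exact_zero (a - b)).mp hsub
      have hx0 : x = 0 := hss x
      rw [hx0, map_zero] at hx
      exact sub_eq_zero.mp hx.symm
    exact hC.iso_closed (r.X 0) M
      ⟨(LinearEquiv.ofBijective r.ε.hom ⟨hinj, r.surj⟩).toModuleIso⟩ (r.mem 0)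
  | succ n ih =>
    obtain ⟨r, hz⟩ := h
    have hd0mem : ∀ x : r.X 1, r.d 0 x ∈ LinearMap.ker r.ε.hom := by
      intro x
      exact LinearMap.mem_ker.mpr ((r.exact_zero (r.d 0 x)).mpr ⟨x, rfl⟩)
    have hεsurj : Function.Surjective
        (LinearMap.codRestrict (LinearMap.ker r.ε.hom) (r.d 0).hom hd0mem) := by
      rintro ⟨k, hk⟩
      obtain ⟨x, hx⟩ := (r.exact_zero k).mp (LinearMap.mem_ker.mp hk)
      exact ⟨x, Subtype.ext hx⟩
    have hex0 : Function.Exact (r.d 1)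
        (LinearMap.codRestrict (LinearMap.ker r.ε.hom) (r.d 0).hom hd0mem) := by
      intro y
      constructor
      · intro hy
        exact (r.exact_succ 0 y).mp (Subtype.ext_iff.mp hy)
      · intro hy
        exact Subtype.ext ((r.exact_succ 0 y).mpr hy)
    refine ⟨ModuleCat.of A (LinearMap.ker r.ε.hom), r.X 0,
      show ModuleCat.of A (LinearMap.ker r.ε.hom) ⟶ r.X 0 from ModuleCat.ofHom (LinearMap.ker r.ε.hom).subtype,
      r.ε, ker_ses r.ε r.surj, r.mem 0, ih ?_⟩
    exact ⟨⟨fun i => r.X (i+1), fun i => r.mem (i+1), fun i => r.d (i+1),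
      show r.X 1 ⟶ ModuleCat.of A (LinearMap.ker r.ε.hom) from
        ModuleCat.ofHom <| LinearMap.codRestrict (LinearMap.ker r.ε.hom) (r.d 0).hom hd0mem,
      hεsurj, hex0, fun i => r.exact_succ (i+1)⟩,
      fun i hi => hz (i+1) (by omega)⟩

/-- The length-zero resolution of an object of `C`. -/
def trivRes (A : Type) [Ring A] (M : ModuleCat A) : ℕ → ModuleCat A
  | 0 => M
  | _+1 => Z0 A

def trivResD (A : Type) [Ring A] (M : ModuleCat A) :
    ∀ i : ℕ, trivRes A M (i+1) ⟶ trivRes A M i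
  | 0 => 0
  | _+1 => 0

def spliceRes (G : ModuleCat A) (rX : ℕ → ModuleCat A) : ℕ → ModuleCat A
  | 0 => G
  | i+1 => rX i

def spliceD {G : ModuleCat A} {rX : ℕ → ModuleCat A}
    (d0 : rX 0 ⟶ G) (dd : ∀ i, rX (i+1) ⟶ rX i) :
    ∀ i, spliceRes G rX (i+1) ⟶ spliceRes G rX i
  | 0 => d0
  | i+1 => dd i

lemma resDim_of_dimLE (hC : IsResolving A C) {M : ModuleCat A} {n : ℕ}
    (h : dimLE C n M) : resDimLE A C M n := by
  induction n generalizing M with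
  | zero =>
    refine ⟨⟨trivRes A M, ?_, trivResD A M, 𝟙 M, fun y => ⟨y, rfl⟩, ?_, ?_⟩, ?_⟩
    · intro i
      cases i with
      | zero => exact h
      | succ k => exact zero_mem hC
    · intro y
      constructor
      · intro hy
        have hy' : y = 0 := hy
        exact ⟨0, by rw [map_zero, hy']⟩
      · rintro ⟨x, rfl⟩
        show (0 : trivRes A M (0+1) →ₗ[A] M) x = 0
        rw [LinearMap.zero_apply]
    · intro i
      haveI : Subsingleton ↑(trivRes A M (i+1)) := (inferInstance : Subsingleton PUnit)
      intro y
      constructor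
      · intro _
        exact ⟨0, Subsingleton.elim _ _⟩
      · intro _
        rw [Subsingleton.elim y (0 : trivRes A M (i+1))]
        exact map_zero _
    · intro i hi
      cases i with
      | zero => omega
      | succ k =>
        haveI : Subsingleton ↑(trivRes A M (k+1)) := (inferInstance : Subsingleton PUnit)
        exact ModuleCat.isZero_of_subsingleton _
  | succ n ih =>
    obtain ⟨K, G, f, g, hs, hG, hK⟩ := h
    obtain ⟨r, hz⟩ := ih hK
    refine ⟨⟨spliceRes G r.X, ?_,
      spliceD (show r.X 0 ⟶ G from ModuleCat.ofHom ((f.hom).comp (r.ε.hom))) r.d,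
      g, hs.2.2, ?_, ?_⟩, ?_⟩
    · intro i
      cases i with
      | zero => exact hG
      | succ k => exact r.mem k
    · intro y
      constructor
      · intro hy
        obtain ⟨k, hk⟩ := (hs.2.1 y).mp hy
        obtain ⟨x, hx⟩ := r.surj k
        refine ⟨x, ?_⟩
        show f (r.ε x) = y
        rw [hx, hk]
      · rintro ⟨x, rfl⟩
        show g ((f.hom).comp (r.ε.hom) x) = 0
        exact (hs.2.1 _).mpr ⟨r.ε x, rfl⟩
    · intro i
      cases i with
      | zero =>
        intro y
        constructor
        · intro hy
          have hy' : f (r.ε y) = 0 := hy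
          have hεy : r.ε y = 0 := hs.1 (by rw [hy', map_zero])
          exact (r.exact_zero y).mp hεy
        · rintro ⟨x, rfl⟩
          show f (r.ε (r.d 0 x)) = 0
          rw [(r.exact_zero (r.d 0 x)).mpr ⟨x, rfl⟩, map_zero]
      | succ k => exact r.exact_succ k
    · intro i hi
      cases i with
      | zero => omega
      | succ k => exact hz k (by omega)

end Stmt1Aux

/-- If `C` is a resolving subcategory of `A`-mod, then for every natural
number `n` the subcategory `C^{≤n}` of modules of `C`-resolution dimension at most `n` is
again resolving, and so is the subcategory `C^{<∞}` of modules of finite `C`-resolution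
dimension. -/
theorem stmt1 (A : Type) [Ring A] [IsArtinianRing A]
    (C : Set (ModuleCat A)) (hC : IsResolving A C) (n : ℕ) :
    IsResolving A {M | resDimLE A C M n} ∧
    IsResolving A {M | ∃ m : ℕ, resDimLE A C M m} := by
  open Stmt1Aux in
  have key := EK hC
  have fwd : ∀ {m : ℕ} {M : ModuleCat A}, resDimLE A C M m → Stmt1Aux.dimLE C m M :=
    fun h => Stmt1Aux.dimLE_of_resDim hC h
  have bwd : ∀ {m : ℕ} {M : ModuleCat A}, Stmt1Aux.dimLE C m M → resDimLE A C M m :=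
    fun h => Stmt1Aux.resDim_of_dimLE hC h
  constructor
  · refine ⟨?_, ?_, ?_, ?_, ?_⟩
    · intro M hM
      exact Stmt1Aux.dimLE_fg hC (fwd hM)
    · intro M hfin hproj
      exact bwd (Stmt1Aux.dimLE_mono hC (Nat.zero_le n) (hC.proj_mem M hfin hproj))
    · rintro M N ⟨e⟩ hM
      exact bwd (Stmt1Aux.dimLE_iso hC e (fwd hM))
    · intro X Y Z f g hs hX hZ
      exact bwd ((key n).1 X Y Z f g hs (fwd hX) (fwd hZ))
    · intro X Y Z f g hs hY hZ
      exact bwd ((key n).2 X Y Z f g hs (fwd hY) (fwd hZ))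
  · refine ⟨?_, ?_, ?_, ?_, ?_⟩
    · rintro M ⟨m, hM⟩
      exact Stmt1Aux.dimLE_fg hC (fwd hM)
    · intro M hfin hproj
      exact ⟨0, bwd (hC.proj_mem M hfin hproj)⟩
    · rintro M N ⟨e⟩ ⟨m, hM⟩
      exact ⟨m, bwd (Stmt1Aux.dimLE_iso hC e (fwd hM))⟩
    · rintro X Y Z f g hs ⟨m1, hX⟩ ⟨m2, hZ⟩
      refine ⟨max m1 m2, bwd ((key (max m1 m2)).1 X Y Z f g hs
        (Stmt1Aux.dimLE_mono hC (le_max_left m1 m2) (fwd hX))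
        (Stmt1Aux.dimLE_mono hC (le_max_right m1 m2) (fwd hZ)))⟩
    · rintro X Y Z f g hs ⟨m1, hY⟩ ⟨m2, hZ⟩
      refine ⟨max m1 m2, bwd ((key (max m1 m2)).2 X Y Z f g hs
        (Stmt1Aux.dimLE_mono hC (le_max_left m1 m2) (fwd hY))
        (Stmt1Aux.dimLE_mono hC (le_max_right m1 m2) (fwd hZ)))⟩
end

section
/- Let F : C → D and G : D → C be inverse resolving dualities between resolving subcategories C ⊆ A-mod and D ⊆ B^{op}-mod (contravariant, exact on the induced exact structures, with GF and FG naturally isomorphic to the identities). Then for every M in C and every i ≥ 1, Ext_A^i(M, G(B)) = 0; in particular C ⊆ ^⊥(G(B)). -/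
open CategoryTheory

section Duality

open Opposite

variable (A : Type) [Ring A]

/-- The full subcategory of `ModuleCat A` on a class of modules. -/
abbrev ResSub (C : Set (ModuleCat A)) := ObjectProperty.FullSubcategory (fun M : ModuleCat A => M ∈ C)

variable {A} {B : Type} [Ring B]

/-- A contravariant functor between fully exact subcategories is exact if it sends
(induced) short exact sequences to short exact sequences. -/
def PreservesSESContra {C : Set (ModuleCat A)} {D : Set (ModuleCat B)}
    (F : (ResSub A C)ᵒᵖ ⥤ ResSub B D) : Prop :=
  ∀ (X Y Z : ResSub A C) (f : X ⟶ Y) (g : Y ⟶ Z),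
    IsSES A ((ObjectProperty.ι _).map f) ((ObjectProperty.ι _).map g) →
    IsSES B ((ObjectProperty.ι _).map (F.map g.op))
      ((ObjectProperty.ι _).map (F.map f.op))

/-- Inverse resolving dualities between `C ⊆ A`-mod and `D ⊆ B`-mod:
`C`, `D` are resolving subcategories, `F`, `G` are contravariant additive functors which
are exact for the induced exact structures, and `G ∘ F ≅ Id`, `F ∘ G ≅ Id`. -/
structure ResolvingDuality (C : Set (ModuleCat A)) (D : Set (ModuleCat B)) where
  resC : IsResolving A C
  resD : IsResolving B D
  F : (ResSub A C)ᵒᵖ ⥤ ResSub B D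
  G : (ResSub B D)ᵒᵖ ⥤ ResSub A C
  Fadd : F.Additive
  Gadd : G.Additive
  Fexact : PreservesSESContra F
  Gexact : PreservesSESContra G
  GF : Nonempty (F.rightOp ⋙ G ≅ 𝟭 (ResSub A C))
  FG : Nonempty (G.rightOp ⋙ F ≅ 𝟭 (ResSub B D))

/-- The regular module, as an object of a resolving subcategory. -/
def regularObj {C : Set (ModuleCat A)} (h : IsResolving A C) : ResSub A C :=
  ⟨ModuleCat.of A A, h.proj_mem _ (Module.Finite.self A) (inferInstance : Module.Projective A A)⟩

end Duality

section AuxProofs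

open Opposite

/-- Syzygies of a projective resolution lie in any resolving subcategory containing `M`. -/
lemma syzygy_mem_resolving {A : Type} [Ring A] {C : Set (ModuleCat A)}
    (hC : IsResolving A C) {M : ModuleCat A} (hM : M ∈ C)
    (r : Resolution A (projClass A) M) :
    ∀ i, ModuleCat.of A (LinearMap.range (r.d i).hom) ∈ C := by
  have hX : ∀ i, r.X i ∈ C := fun i => hC.proj_mem _ (r.mem i).1 (r.mem i).2
  intro i
  induction i with
  | zero =>
    refine hC.ker_closed (ModuleCat.of A (LinearMap.range (r.d 0).hom)) (r.X 0) M
      (ModuleCat.ofHom (LinearMap.range (r.d 0).hom).subtype) r.ε ⟨Subtype.val_injective, ?_, r.surj⟩ (hX 0) hM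
    show Function.Exact (LinearMap.range (r.d 0).hom).subtype r.ε.hom
    rw [LinearMap.exact_iff, Submodule.range_subtype]
    exact (LinearMap.exact_iff.mp r.exact_zero)
  | succ n ih =>
    refine hC.ker_closed (ModuleCat.of A (LinearMap.range (r.d (n+1)).hom)) (r.X (n+1))
      (ModuleCat.of A (LinearMap.range (r.d n).hom))
      (ModuleCat.ofHom (LinearMap.range (r.d (n+1)).hom).subtype) (ModuleCat.ofHom (r.d n).hom.rangeRestrict)
      ⟨Subtype.val_injective, ?_, LinearMap.surjective_rangeRestrict _⟩ (hX (n+1)) ih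
    show Function.Exact (LinearMap.range (r.d (n+1)).hom).subtype (r.d n).hom.rangeRestrict
    rw [LinearMap.exact_iff, Submodule.range_subtype, LinearMap.ker_rangeRestrict]
    exact (LinearMap.exact_iff.mp (r.exact_succ n))

/-- `F(G(B))` is a projective `Bᵐᵒᵖ`-module. -/
lemma GB_projective {A B : Type} [Ring A] [Ring B]
    {C : Set (ModuleCat A)} {D : Set (ModuleCat Bᵐᵒᵖ)} (dl : ResolvingDuality C D) :
    Module.Projective Bᵐᵒᵖ
      ((dl.F.obj (op (dl.G.obj (op (regularObj dl.resD))))).obj) := by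
  obtain ⟨e2⟩ := dl.FG
  have isoU : (dl.F.obj (op (dl.G.obj (op (regularObj dl.resD))))).obj
      ≅ (regularObj dl.resD).obj :=
    (ObjectProperty.ι _).mapIso (e2.app (regularObj dl.resD))
  haveI hPreg : Module.Projective Bᵐᵒᵖ ((regularObj dl.resD).obj) :=
    inferInstanceAs (Module.Projective Bᵐᵒᵖ Bᵐᵒᵖ)
  exact Module.Projective.of_equiv isoU.symm.toLinearEquiv

/-- Any short exact sequence in `C` whose first term has projective image under `F`
splits. -/
lemma split_general {A B : Type} [Ring A] [Ring B]
    {C : Set (ModuleCat A)} {D : Set (ModuleCat Bᵐᵒᵖ)} (dl : ResolvingDuality C D)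
    (NC Ycat Zcat : ResSub A C)
    (hP : Module.Projective Bᵐᵒᵖ ((dl.F.obj (op NC)).obj))
    (f : NC ⟶ Ycat) (g : Ycat ⟶ Zcat)
    (hses : IsSES A ((ObjectProperty.ι _).map f)
      ((ObjectProperty.ι _).map g)) :
    ∃ r : Ycat ⟶ NC, f ≫ r = 𝟙 NC := by
  have hF := dl.Fexact NC Ycat Zcat f g hses
  haveI := hP
  obtain ⟨s0, hs0⟩ := Module.projective_lifting_property
    ((ObjectProperty.ι _).map (dl.F.map f.op)).hom
    (LinearMap.id : (dl.F.obj (op NC)).obj →ₗ[Bᵐᵒᵖ] (dl.F.obj (op NC)).obj) hF.2.2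
  obtain ⟨s, hsec⟩ : ∃ s : dl.F.obj (op NC) ⟶ dl.F.obj (op Ycat),
      s ≫ dl.F.map f.op = 𝟙 (dl.F.obj (op NC)) := ⟨InducedCategory.homMk (ModuleCat.ofHom s0), InducedCategory.hom_ext (ModuleCat.hom_ext hs0)⟩
  obtain ⟨e⟩ := dl.GF
  have hGcomp : (dl.F.rightOp ⋙ dl.G).map f ≫ dl.G.map s.op = 𝟙 _ := by
    show dl.G.map (dl.F.map f.op).op ≫ dl.G.map s.op = _
    rw [← dl.G.map_comp, ← op_comp, hsec, op_id, dl.G.map_id]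
    rfl
  have h1 : f ≫ e.inv.app Ycat = e.inv.app NC ≫ (dl.F.rightOp ⋙ dl.G).map f := by
    simpa using (e.inv.naturality f)
  refine ⟨e.inv.app Ycat ≫ dl.G.map s.op ≫ e.hom.app NC, ?_⟩
  calc f ≫ (e.inv.app Ycat ≫ dl.G.map s.op ≫ e.hom.app NC)
      = (f ≫ e.inv.app Ycat) ≫ (dl.G.map s.op ≫ e.hom.app NC) := by
        simp only [Category.assoc]
    _ = e.inv.app NC ≫ ((dl.F.rightOp ⋙ dl.G).map f ≫ dl.G.map s.op) ≫
        e.hom.app NC := by rw [h1]; simp only [Category.assoc]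
    _ = e.inv.app NC ≫ 𝟙 _ ≫ e.hom.app NC := by rw [hGcomp]
    _ = 𝟙 NC := by simp

/-- The extension/lifting step: a map `h : X1 → N` vanishing on `ker d` extends
along `d : X1 → X2`, provided every SES in `C` under `N` splits. -/
lemma extend_step {A : Type} [Ring A] {C : Set (ModuleCat A)} (hC : IsResolving A C)
    (N : ModuleCat A) (hN : N ∈ C)
    (split : ∀ (Y Z : ModuleCat A), Y ∈ C → Z ∈ C → ∀ (f : N ⟶ Y) (g : Y ⟶ Z),
      IsSES A f g → ∃ r : Y ⟶ N, f ≫ r = 𝟙 N)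
    (X1 X2 Z : ModuleCat A) (hX2 : X2 ∈ C) (hZ : Z ∈ C)
    (d : X1 ⟶ X2) (π : X2 ⟶ Z) (hπ : Function.Surjective π)
    (hker : LinearMap.ker π.hom = LinearMap.range d.hom)
    (h : X1 ⟶ N) (hle : LinearMap.ker d.hom ≤ LinearMap.ker h.hom) :
    ∃ g : X2 ⟶ N, d ≫ g = h := by
  set Ω : Submodule A X2 := LinearMap.range d.hom with hΩ
  set hbar : Ω →ₗ[A] N :=
    ((LinearMap.ker d.hom).liftQ h.hom hle).comp
      (LinearMap.quotKerEquivRange d.hom).symm.toLinearMap with hhbar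
  have hbar_spec : ∀ x : X1, hbar ((LinearMap.rangeRestrict d.hom) x) = h x := by
    intro x
    have h1 : (LinearMap.rangeRestrict d.hom) x = ⟨d x, LinearMap.mem_range_self d.hom x⟩ := rfl
    rw [hhbar, LinearMap.comp_apply, h1]
    rw [LinearEquiv.coe_toLinearMap,
      LinearMap.quotKerEquivRange_symm_apply_image d.hom x (LinearMap.mem_range_self d.hom x)]
    exact Submodule.liftQ_apply _ h.hom x
  -- the pushout
  set W : Submodule A (N × X2) :=
    LinearMap.range (LinearMap.prod hbar (-(Ω.subtype))) with hW
  have hWmem : ∀ u : Ω, ((hbar u, -(u : X2)) : N × X2) ∈ W := fun u => ⟨u, rfl⟩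
  set E : ModuleCat A := ModuleCat.of A ((N × X2) ⧸ W) with hE
  set jN : N ⟶ E := ModuleCat.ofHom (W.mkQ.comp (LinearMap.inl A N X2)) with hjN
  set jX : X2 ⟶ E := ModuleCat.ofHom (W.mkQ.comp (LinearMap.inr A N X2)) with hjX
  have hWle : W ≤ LinearMap.ker (π.hom.comp (LinearMap.snd A N X2)) := by
    rintro _ ⟨u, rfl⟩
    have hu : (u : X2) ∈ LinearMap.ker π.hom := by rw [hker]; exact u.2
    rw [LinearMap.mem_ker] at hu ⊢
    show π.hom (-(u : X2)) = 0
    rw [map_neg, hu, neg_zero]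
  set π' : E ⟶ Z := ModuleCat.ofHom (W.liftQ (π.hom.comp (LinearMap.snd A N X2)) hWle) with hπ'
  have hinj : Function.Injective jN := by
    intro a b hab
    have hz : jN (a - b) = 0 := by rw [map_sub, hab, sub_self]
    have hmem : ((a - b, 0) : N × X2) ∈ W :=
      (Submodule.Quotient.mk_eq_zero W).mp (by exact hz)
    obtain ⟨u, hu⟩ := hmem
    have hu1 : hbar u = a - b := congrArg Prod.fst hu
    have hu2 : -(u : X2) = (0 : X2) := congrArg Prod.snd hu
    have hu0 : u = 0 := Subtype.ext (by rwa [neg_eq_zero] at hu2)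
    rw [hu0, map_zero] at hu1
    exact sub_eq_zero.mp hu1.symm
  have hexact : Function.Exact jN π' := by
    rw [LinearMap.exact_iff]
    apply le_antisymm
    · intro e he
      obtain ⟨⟨n, x⟩, rfl⟩ := Submodule.Quotient.mk_surjective W e
      have hx0 : π x = 0 := by exact LinearMap.mem_ker.mp he
      have hx : x ∈ Ω := by rw [← hker]; exact LinearMap.mem_ker.mpr hx0
      refine ⟨n + hbar ⟨x, hx⟩, ?_⟩
      show Submodule.Quotient.mk ((n + hbar ⟨x, hx⟩, 0) : N × X2) =
        Submodule.Quotient.mk ((n, x) : N × X2)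
      rw [Submodule.Quotient.eq]
      refine ⟨⟨x, hx⟩, ?_⟩
      show ((hbar ⟨x, hx⟩, -(Ω.subtype ⟨x, hx⟩)) : N × X2) =
        (n + hbar ⟨x, hx⟩, 0) - (n, x)
      rw [Prod.mk_sub_mk]
      refine Prod.ext ?_ ?_
      · show hbar ⟨x, hx⟩ = n + hbar ⟨x, hx⟩ - n
        rw [add_sub_cancel_left]
      · show -x = 0 - x
        rw [zero_sub]
    · rintro _ ⟨m, rfl⟩
      exact LinearMap.mem_ker.mpr (by exact map_zero π.hom)
  have hsurjπ' : Function.Surjective π' := by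
    intro z
    obtain ⟨x, hx⟩ := hπ z
    exact ⟨Submodule.Quotient.mk ((0, x) : N × X2), by exact hx⟩
  have hEmem : E ∈ C :=
    hC.ext_closed N E Z jN π' ⟨hinj, hexact, hsurjπ'⟩ hN hZ
  obtain ⟨r, hr⟩ := split E Z hEmem hZ jN π' ⟨hinj, hexact, hsurjπ'⟩
  have hretr : ∀ w : N, r (jN w) = w := fun w =>
    LinearMap.congr_fun
      (show LinearMap.comp r.hom jN.hom = LinearMap.id from by exact congrArg ModuleCat.Hom.hom hr) w
  refine ⟨jX ≫ r, ?_⟩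
  apply ModuleCat.hom_ext
  apply LinearMap.ext
  intro x
  have step1 : jX (d x) = jN (hbar ((LinearMap.rangeRestrict d.hom) x)) := by
    show Submodule.Quotient.mk ((0, d x) : N × X2) =
      Submodule.Quotient.mk ((hbar ((LinearMap.rangeRestrict d.hom) x), 0) : N × X2)
    rw [Submodule.Quotient.eq]
    refine ⟨-((LinearMap.rangeRestrict d.hom) x), ?_⟩
    have h1 : (((LinearMap.rangeRestrict d.hom) x : Ω) : X2) = d x := rfl
    show ((hbar (-((LinearMap.rangeRestrict d.hom) x)),
        -(Ω.subtype (-((LinearMap.rangeRestrict d.hom) x)))) : N × X2) =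
      (0, d x) - (hbar ((LinearMap.rangeRestrict d.hom) x), 0)
    rw [Prod.mk_sub_mk]
    refine Prod.ext ?_ ?_
    · show hbar (-((LinearMap.rangeRestrict d.hom) x)) = 0 - hbar ((LinearMap.rangeRestrict d.hom) x)
      rw [map_neg, zero_sub]
    · show -(Ω.subtype (-((LinearMap.rangeRestrict d.hom) x))) = d x - 0
      rw [map_neg, neg_neg, sub_zero]
      exact h1
  show r (jX (d x)) = h x
  rw [step1, hretr, hbar_spec]

end AuxProofs

/-- Let `F : C → D` and `G : D → C` be inverse resolving dualities
between resolving subcategories `C ⊆ A`-mod and `D ⊆ B^{op}`-mod.  Then for every `M` in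
`C` and every `i ≥ 1`, `Ext_A^i(M, G(B)) = 0`; in particular `C ⊆ ^⊥(G(B))`. -/
theorem stmt6 (A B : Type) [Ring A] [Ring B] [IsArtinianRing A] [IsArtinianRing B]
    (C : Set (ModuleCat A)) (D : Set (ModuleCat Bᵐᵒᵖ))
    (dl : ResolvingDuality C D) :
    ∀ M : ModuleCat A, M ∈ C →
      extVanish A M ((dl.G.obj (Opposite.op (regularObj dl.resD))).obj) := by
  intro M hM r i _
  have hNmem : (dl.G.obj (Opposite.op (regularObj dl.resD))).obj ∈ C :=
    (dl.G.obj (Opposite.op (regularObj dl.resD))).property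
  have split : ∀ (Y Z : ModuleCat A), Y ∈ C → Z ∈ C →
      ∀ (f : (dl.G.obj (Opposite.op (regularObj dl.resD))).obj ⟶ Y) (g : Y ⟶ Z),
      IsSES A f g → ∃ r' : Y ⟶ (dl.G.obj (Opposite.op (regularObj dl.resD))).obj,
        f ≫ r' = 𝟙 _ := by
    intro Y Z hY hZ f g hses
    obtain ⟨r', hr'⟩ := split_general dl (dl.G.obj (Opposite.op (regularObj dl.resD)))
      ⟨Y, hY⟩ ⟨Z, hZ⟩ (GB_projective dl) (InducedCategory.homMk f) (InducedCategory.homMk g) (by exact hses)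
    exact ⟨r'.hom, by exact congrArg InducedCategory.Hom.hom hr'⟩
  intro h
  constructor
  · intro hcomp
    have hcomp' : ∀ y, h (r.d (i+1) y) = 0 := by
      intro y
      have := congrArg
        (fun q : r.X (i+1+1) ⟶ (dl.G.obj (Opposite.op (regularObj dl.resD))).obj => q y) hcomp
      simpa using this
    have hle : LinearMap.ker (r.d i).hom ≤ LinearMap.ker h.hom := by
      intro x hx
      rw [LinearMap.mem_ker] at hx ⊢
      obtain ⟨y, rfl⟩ := (r.exact_succ i x).mp hx
      exact hcomp' y
    have hX2 : r.X i ∈ C := dl.resC.proj_mem _ (r.mem i).1 (r.mem i).2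
    cases i with
    | zero =>
      obtain ⟨g, hg⟩ := extend_step dl.resC _ hNmem split (r.X 1) (r.X 0) M hX2 hM
        (r.d 0) r.ε r.surj (LinearMap.exact_iff.mp r.exact_zero) h hle
      exact ⟨g, hg⟩
    | succ k =>
      obtain ⟨g, hg⟩ := extend_step dl.resC _ hNmem split (r.X (k+1+1)) (r.X (k+1))
        (ModuleCat.of A (LinearMap.range (r.d k).hom))
        hX2 (syzygy_mem_resolving dl.resC hM r k)
        (r.d (k+1)) (ModuleCat.ofHom (r.d k).hom.rangeRestrict) (LinearMap.surjective_rangeRestrict _)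
        (by rw [ModuleCat.hom_ofHom, LinearMap.ker_rangeRestrict]; exact LinearMap.exact_iff.mp (r.exact_succ k))
        h hle
      exact ⟨g, hg⟩
  · rintro ⟨g, rfl⟩
    show r.d (i+1) ≫ (r.d i ≫ g) = 0
    apply ModuleCat.hom_ext
    apply LinearMap.ext
    intro x
    have h0 : r.d i (r.d (i+1) x) = 0 := (r.exact_succ i (r.d (i+1) x)).mpr ⟨x, rfl⟩
    show g (r.d i (r.d (i+1) x)) = 0
    rw [h0, map_zero]
end

section
/- Let F : C → D and G : D → C be inverse resolving dualities between resolving subcategories C ⊆ A-mod and D ⊆ B^{op}-mod. Then the bimodule T with T ≅ G(B) as a left A-module and T ≅ F(A) as a right B-module is a Wakamatsu tilting A-B-bimodule, F ≅ Hom_A(−,T)|_C, G ≅ Hom_{B^{op}}(−,T)|_D, and C ⊆ W(_AT), D ⊆ W(T_B). -/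
open CategoryTheory

section Bimodule

open Opposite

/-- An `A`-`B₂`-bimodule (where `B₂` plays the role of `B^{op}`, so that right `B`-modules
are left `B₂`-modules). -/
structure BimoduleOver (A B₂ : Type) [Ring A] [Ring B₂] where
  T : Type
  [acg : AddCommGroup T]
  [modA : Module A T]
  [modB : Module B₂ T]
  [comm : SMulCommClass A B₂ T]
  [comm' : SMulCommClass B₂ A T]

attribute [instance] BimoduleOver.acg BimoduleOver.modA BimoduleOver.modB
  BimoduleOver.comm BimoduleOver.comm'

variable {A B₂ : Type} [Ring A] [Ring B₂]

/-- The underlying left `A`-module of a bimodule. -/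
def BimoduleOver.left (W : BimoduleOver A B₂) : ModuleCat A := ModuleCat.of A W.T

/-- The underlying left `B₂`-module (i.e. right `B`-module) of a bimodule. -/
def BimoduleOver.right (W : BimoduleOver A B₂) : ModuleCat B₂ := ModuleCat.of B₂ W.T

/-- The canonical map `A → End_{B₂}(T)` given by the left action. -/
def BimoduleOver.leftAction (W : BimoduleOver A B₂) (a : A) : W.T →ₗ[B₂] W.T where
  toFun t := a • t
  map_add' := smul_add a
  map_smul' b t := smul_comm a b t

/-- The canonical map `B₂ → End_A(T)` given by the `B₂`-action. -/
def BimoduleOver.rightAction (W : BimoduleOver A B₂) (b : B₂) : W.T →ₗ[A] W.T where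
  toFun t := b • t
  map_add' := smul_add b
  map_smul' a t := smul_comm b a t

/-- The bimodule is faithfully balanced: the two canonical maps
`A → End_{B₂}(T)` and `B₂ → End_A(T)` are bijective. -/
def BimoduleOver.IsFaithfullyBalanced (W : BimoduleOver A B₂) : Prop :=
  Function.Bijective W.leftAction ∧ Function.Bijective W.rightAction

/-- A Wakamatsu tilting bimodule: faithfully balanced and Wakamatsu tilting on both
sides. -/
def BimoduleOver.IsWakamatsuTiltingBimodule (W : BimoduleOver A B₂) : Prop :=
  W.IsFaithfullyBalanced ∧ IsWakamatsuTilting A W.left ∧ IsWakamatsuTilting B₂ W.right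

/-- A tilting bimodule (of projective dimension at most `ℓ`). -/
def BimoduleOver.IsTiltingBimodule (W : BimoduleOver A B₂) (ℓ : ℕ) : Prop :=
  W.IsFaithfullyBalanced ∧ IsTiltingOfDim A W.left ℓ ∧ IsTiltingOfDim B₂ W.right ℓ

/-- The contravariant Hom-functor `Hom_A(-, T) : (A-mod)ᵒᵖ → B₂-mod` attached to a
bimodule `T`. -/
def BimoduleOver.homFunctor (W : BimoduleOver A B₂) :
    (ModuleCat A)ᵒᵖ ⥤ ModuleCat B₂ where
  obj M := ModuleCat.of B₂ (M.unop →ₗ[A] W.T)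
  map {M N} f := ModuleCat.ofHom
    { toFun := fun g => g.comp f.unop.hom
      map_add' := fun g h => LinearMap.add_comp _ _ _
      map_smul' := fun b g => rfl }
  map_id := by intros; rfl
  map_comp := by intros; rfl

/-- The opposite bimodule, exchanging the two actions. -/
def BimoduleOver.flip (W : BimoduleOver A B₂) : BimoduleOver B₂ A where
  T := W.T

/-- `Hom_A(M, T)` as a left `B₂`-module, for `M` an `A`-module. -/
def BimoduleOver.homObj (W : BimoduleOver A B₂) (M : ModuleCat A) : ModuleCat B₂ :=
  ModuleCat.of B₂ (M →ₗ[A] W.T)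

/-- The evaluation (double dual) map `M → Hom_{B₂}(Hom_A(M,T), T)`. -/
def BimoduleOver.eval (W : BimoduleOver A B₂) (M : ModuleCat A) (m : M) :
    (M →ₗ[A] W.T) →ₗ[B₂] W.T where
  toFun f := f m
  map_add' f g := rfl
  map_smul' b f := rfl

end Bimodule

namespace S7

open Opposite Function

/-! ### Generic transport lemmas -/

lemma exact_transport {α β γ α' β' γ' : Type*} [Zero γ] [Zero γ']
    {f : α → β} {g : β → γ} {f' : α' → β'} {g' : β' → γ'}
    (e1 : α → α') (e2 : β ≃ β') (e3 : γ → γ')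
    (hs : Function.Surjective e1) (hi : Function.Injective e3) (h3 : e3 0 = 0)
    (sq1 : ∀ a, f' (e1 a) = e2 (f a)) (sq2 : ∀ b, g' (e2 b) = e3 (g b))
    (h : Function.Exact f g) : Function.Exact f' g' := by
  intro b'
  obtain ⟨b, rfl⟩ := e2.surjective b'
  rw [sq2]
  constructor
  · intro h0
    have : g b = 0 := hi (by rw [h0, h3])
    obtain ⟨a, ha⟩ := (h b).mp this
    exact ⟨e1 a, by rw [sq1, ha]⟩
  · rintro ⟨a', ha'⟩
    obtain ⟨a, rfl⟩ := hs a'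
    rw [sq1] at ha'
    have hb : f a = b := e2.injective ha'
    rw [(h b).mpr ⟨a, hb⟩, h3]

lemma exact_comp_of_exact {α β γ δ ε : Type*} [Zero γ] [Zero ε]
    {f : α → β} {g : β → γ} {p : δ → α} {i : γ → ε}
    (hp : Function.Surjective p) (hi : Function.Injective i) (h0 : i 0 = 0)
    (h : Function.Exact f g) : Function.Exact (f ∘ p) (i ∘ g) := by
  intro b
  constructor
  · intro hb
    have : g b = 0 := hi (by simp only [Function.comp_apply] at hb; rw [hb, h0])
    obtain ⟨a, ha⟩ := (h b).mp this
    obtain ⟨d, rfl⟩ := hp a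
    exact ⟨d, ha⟩
  · rintro ⟨d, rfl⟩
    simp only [Function.comp_apply]
    rw [(h _).mpr ⟨p d, rfl⟩, h0]


/-! ### Morphism application in full subcategories -/

section MP
open CategoryTheory
variable {R : Type} [Ring R] {Z : ModuleCat R → Prop}

/-- The underlying `ModuleCat` morphism of a morphism in a full subcategory. -/
def mp {X Y : ObjectProperty.FullSubcategory Z} (f : X ⟶ Y) : X.obj ⟶ Y.obj :=
  (ObjectProperty.ι Z).map f

@[simp] lemma mp_comp {X Y W : ObjectProperty.FullSubcategory Z} (f : X ⟶ Y) (g : Y ⟶ W) :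
    mp (f ≫ g) = mp f ≫ mp g := rfl

@[simp] lemma mp_id {X : ObjectProperty.FullSubcategory Z} : mp (𝟙 X) = 𝟙 X.obj := rfl

lemma mp_inj {X Y : ObjectProperty.FullSubcategory Z} {f g : X ⟶ Y} (h : mp f = mp g) : f = g := InducedCategory.hom_ext h

end MP

/-! ### The equivalence attached to a resolving duality -/

section Gen

open CategoryTheory

variable {R S : Type} [Ring R] [Ring S] {C : Set (ModuleCat R)} {D : Set (ModuleCat S)}

/-- The underlying equivalence `C ≌ Dᵒᵖ`. -/
noncomputable def duEquiv (d : ResolvingDuality C D) : ResSub R C ≌ (ResSub S D)ᵒᵖ :=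
  CategoryTheory.Equivalence.mk d.F.rightOp d.G d.GF.some.symm
    (NatIso.ofComponents (fun X => (d.FG.some.app X.unop).op.symm) (by
      intro X Y f
      apply Quiver.Hom.unop_inj
      have h := d.FG.some.inv.naturality f.unop
      simp only [Functor.id_map] at h
      simpa using h.symm))

variable (d : ResolvingDuality C D)

/-- The regular module over `S` in `D`. -/
abbrev RD : ResSub S D :=
  ⟨ModuleCat.of S S, d.resD.proj_mem _ (Module.Finite.self S) (inferInstanceAs (Module.Projective S S))⟩

/-- The regular module over `R` in `C`. -/
abbrev RC : ResSub R C :=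
  ⟨ModuleCat.of R R, d.resC.proj_mem _ (Module.Finite.self R) (inferInstanceAs (Module.Projective R R))⟩

lemma RD_eq : RD d = regularObj d.resD := rfl
lemma RC_eq : RC d = regularObj d.resC := rfl

/-- The object `G(S)` of `C`. -/
abbrev Tobj : ResSub R C := d.G.obj (op (RD d))

/-- Right multiplication, as a linear map. -/
def rmL (b : S) : S →ₗ[S] S :=
  { toFun := fun x => x * b
    map_add' := fun x y => add_mul x y b
    map_smul' := fun r x => by simp [smul_eq_mul, mul_assoc] }

/-- Right multiplication as an endomorphism of the regular module. -/
def rmulM (b : S) : RD d ⟶ RD d := ObjectProperty.homMk (ModuleCat.ofHom (rmL b))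

lemma rmulM_one : rmulM d 1 = 𝟙 (RD d) :=
  InducedCategory.hom_ext (ModuleCat.hom_ext (LinearMap.ext fun x : S => mul_one x))

lemma rmulM_comp (b c : S) : rmulM d b ≫ rmulM d c = rmulM d (b * c) :=
  InducedCategory.hom_ext (ModuleCat.hom_ext (LinearMap.ext fun x : S => mul_assoc x b c))

lemma rmulM_add (b c : S) : rmulM d (b + c) = rmulM d b + rmulM d c :=
  InducedCategory.hom_ext (ModuleCat.hom_ext (LinearMap.ext fun x : S => mul_add x b c))

lemma rmulM_zero : rmulM d 0 = 0 :=
  InducedCategory.hom_ext (ModuleCat.hom_ext (LinearMap.ext fun x : S => mul_zero x))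

/-- The action of `S` on `G(S)` by functoriality. -/
noncomputable def psi (b : S) : Tobj d ⟶ Tobj d := d.G.map (rmulM d b).op

lemma psi_one : psi d 1 = 𝟙 (Tobj d) := by
  rw [psi, rmulM_one, op_id, d.G.map_id]

lemma psi_mul (b c : S) : psi d (b * c) = psi d c ≫ psi d b := by
  rw [psi, ← rmulM_comp, op_comp, d.G.map_comp]; rfl

lemma psi_add (b c : S) : psi d (b + c) = psi d b + psi d c := by
  haveI := d.Gadd
  rw [psi, rmulM_add]
  have h : (rmulM d b + rmulM d c).op = (rmulM d b).op + (rmulM d c).op := rfl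
  rw [h, Functor.map_add]; rfl

lemma psi_zero : psi d 0 = 0 := by
  haveI := d.Gadd
  rw [psi, rmulM_zero]
  have h : ((0 : RD d ⟶ RD d)).op = (0 : op (RD d) ⟶ op (RD d)) := rfl
  rw [h, Functor.map_zero]

/-- The carrier of `T`. -/
abbrev Tcar : Type := ((Tobj d).obj : Type)

/-- The `S`-module structure on `T = G(S)`. -/
noncomputable def moduleS : Module S (Tcar d) where
  smul b t := mp (psi d b) t
  one_smul t := by show mp (psi d 1) t = t; rw [psi_one]; rfl
  mul_smul b c t := by
    show mp (psi d (b * c)) t = mp (psi d b) (mp (psi d c) t)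
    rw [psi_mul]; rfl
  smul_zero b := map_zero (mp (psi d b)).hom
  smul_add b t u := map_add (mp (psi d b)).hom t u
  add_smul b c t := by
    show mp (psi d (b + c)) t = mp (psi d b) t + mp (psi d c) t
    rw [psi_add]; rfl
  zero_smul t := by show mp (psi d 0) t = 0; rw [psi_zero]; rfl

/-- The bimodule attached to a resolving duality. -/
noncomputable def Wgen : BimoduleOver R S :=
  letI : Module S (Tcar d) := moduleS d
  { T := Tcar d
    comm := ⟨fun a b t => (map_smul (mp (psi d b)).hom a t).symm⟩
    comm' := ⟨fun b a t => map_smul (mp (psi d b)).hom a t⟩ }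

lemma Wgen_smulS (b : S) (t : (Wgen d).T) : b • t = mp (psi d b) t := rfl

lemma Wgen_smulR (a : R) (t : (Wgen d).T) : a • t = (a • t : Tcar d) := rfl

end Gen


section Gen2
open CategoryTheory Opposite
variable {R S : Type} [Ring R] [Ring S] {C : Set (ModuleCat R)} {D : Set (ModuleCat S)}
variable (d : ResolvingDuality C D)

/-- The adjunction of the duality equivalence. -/
noncomputable def duAdj : (duEquiv d).functor ⊣ (duEquiv d).inverse := (duEquiv d).toAdjunction

/-- Transfer of morphisms `S ⟶ F X` to morphisms `X ⟶ T`. -/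
noncomputable def hE {X : ResSub R C} (h : RD d ⟶ d.F.obj (op X)) : X ⟶ Tobj d :=
  (duAdj d).homEquiv X (op (RD d)) h.op

lemma hE_bijective {X : ResSub R C} : Function.Bijective (hE d (X := X)) := by
  have h1 : Function.Bijective (fun h : RD d ⟶ d.F.obj (op X) => h.op) :=
    ⟨fun _ _ h => Quiver.Hom.op_inj h, fun k => ⟨k.unop, rfl⟩⟩
  exact (((duAdj d).homEquiv X (op (RD d))).bijective).comp h1

lemma hE_natural {X X' : ResSub R C} (f : X' ⟶ X) (h : RD d ⟶ d.F.obj (op X)) :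
    f ≫ hE d h = hE d (h ≫ d.F.map f.op) := by
  have h2 : (h ≫ d.F.map f.op).op = (duEquiv d).functor.map f ≫ h.op := rfl
  rw [hE, hE, h2]
  erw [(duAdj d).homEquiv_naturality_left]
  rfl

lemma hE_rmul {X : ResSub R C} (b : S) (h : RD d ⟶ d.F.obj (op X)) :
    hE d (rmulM d b ≫ h) = hE d h ≫ psi d b := by
  have h2 : (rmulM d b ≫ h).op = h.op ≫ (rmulM d b).op := rfl
  rw [hE, hE, h2]
  erw [(duAdj d).homEquiv_naturality_right]
  rfl

lemma hE_add {X : ResSub R C} (h h' : RD d ⟶ d.F.obj (op X)) :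
    hE d (h + h') = hE d h + hE d h' := by
  haveI : (duEquiv d).inverse.Additive := d.Gadd
  have h2 : (h + h').op = h.op + h'.op := rfl
  rw [hE, hE, hE, h2]
  erw [(duAdj d).homEquiv_unit, (duAdj d).homEquiv_unit,
    (duAdj d).homEquiv_unit]
  show _ ≫ (duEquiv d).inverse.map _ = _
  erw [Functor.map_add, CategoryTheory.Preadditive.comp_add]
  rfl

/-- `toSpanSingleton` as a morphism from the regular module. -/
noncomputable def tsp {Y : ResSub S D} (y : Y.obj) : RD d ⟶ Y :=
  ObjectProperty.homMk (ModuleCat.ofHom (LinearMap.toSpanSingleton S Y.obj y))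

lemma tsp_eval {Y : ResSub S D} (y : Y.obj) : mp (tsp d y) ((1 : S) : (RD d).obj) = y :=
  one_smul S y

lemma tsp_of_eval {Y : ResSub S D} (f : RD d ⟶ Y) :
    tsp d (mp f ((1 : S) : (RD d).obj)) = f := by
  apply mp_inj
  apply ModuleCat.hom_ext
  apply LinearMap.ext
  intro s
  show (show S from s) • mp f (1 : S) = mp f s
  rw [← map_smul (mp f).hom]
  congr 1
  show (show S from s) • (1 : S) = _
  rw [smul_eq_mul, mul_one]

lemma tsp_post {Y Y' : ResSub S D} (g : Y ⟶ Y') (y : Y.obj) :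
    tsp d (mp g y) = tsp d y ≫ g := by
  apply mp_inj
  apply ModuleCat.hom_ext
  apply LinearMap.ext
  intro s
  show (show S from s) • mp g y = mp g ((show S from s) • y)
  rw [map_smul]

lemma tsp_smul {Y : ResSub S D} (b : S) (y : Y.obj) :
    tsp d (b • y) = rmulM d b ≫ tsp d y := by
  apply mp_inj
  apply ModuleCat.hom_ext
  apply LinearMap.ext
  intro s
  show (show S from s) • (b • y) = ((show S from s) * b) • y
  rw [mul_smul]

lemma tsp_add {Y : ResSub S D} (y y' : Y.obj) :
    tsp d (y + y') = tsp d y + tsp d y' := by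
  apply mp_inj
  apply ModuleCat.hom_ext
  apply LinearMap.ext
  intro s
  show (show S from s) • (y + y') = (show S from s) • y + (show S from s) • y'
  rw [smul_add]

lemma tsp_zero {Y : ResSub S D} : tsp d (0 : Y.obj) = 0 := by
  apply mp_inj
  apply ModuleCat.hom_ext
  apply LinearMap.ext
  intro s
  exact smul_zero (show S from s)

lemma tsp_bijective {Y : ResSub S D} : Function.Bijective (tsp d (Y := Y)) := by
  constructor
  · intro y y' h
    have h2 := congrArg (fun f : RD d ⟶ Y => mp f ((1 : S) : (RD d).obj)) h
    exact (tsp_eval d y).symm.trans ((congrArg _ rfl).trans (h2.trans (tsp_eval d y')))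
  · intro f
    exact ⟨mp f ((1 : S) : (RD d).obj), tsp_of_eval d f⟩

end Gen2


section Gen3
open CategoryTheory Opposite
variable {R S : Type} [Ring R] [Ring S] {C : Set (ModuleCat R)} {D : Set (ModuleCat S)}
variable (d : ResolvingDuality C D)

/-- Reinterpret a morphism `X ⟶ T` in `C` as a linear map into the bimodule carrier. -/
def toLin {X : ResSub R C} (f : X ⟶ Tobj d) : X.obj →ₗ[R] (Wgen d).T := (mp f).hom

lemma toLin_bijective {X : ResSub R C} : Function.Bijective (toLin d (X := X)) :=
  ⟨fun f g h => InducedCategory.hom_ext (ModuleCat.hom_injective h),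
    fun l => ⟨ObjectProperty.homMk (ModuleCat.ofHom l), rfl⟩⟩

/-- The double-dual comparison: `F X ≅ Hom_R(X, T)` as an `S`-linear equivalence. -/
noncomputable def theta (X : ResSub R C) :
    ((d.F.obj (op X)).obj : Type) ≃ₗ[S] (X.obj →ₗ[R] (Wgen d).T) := by
  refine LinearEquiv.ofBijective
    { toFun := fun y => toLin d (hE d (tsp d y))
      map_add' := fun y y' => ?_
      map_smul' := fun b y => ?_ } ?_
  · show toLin d (hE d (tsp d (y + y'))) = _
    rw [tsp_add, hE_add]; rfl
  · show toLin d (hE d (tsp d (b • y)))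
      = b • toLin d (hE d (tsp d y))
    rw [tsp_smul, hE_rmul]
    apply LinearMap.ext
    intro m
    show mp (hE d (tsp d y) ≫ psi d b) m = mp (psi d b) (mp (hE d (tsp d y)) m)
    rfl
  · exact (toLin_bijective d).comp ((hE_bijective d).comp (tsp_bijective d))

lemma theta_apply (X : ResSub R C) (y : (d.F.obj (op X)).obj) :
    theta d X y = toLin d (hE d (tsp d y)) := rfl

lemma theta_natural {X X' : ResSub R C} (f : X' ⟶ X) (y : (d.F.obj (op X)).obj) :
    theta d X' (mp (d.F.map f.op) y) = (theta d X y).comp (mp f).hom := by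
  rw [theta_apply, theta_apply]
  have h1 : tsp d (mp (d.F.map f.op) y) = tsp d y ≫ d.F.map f.op := tsp_post d _ y
  rw [h1, ← hE_natural]
  rfl

end Gen3


section Gen4
open CategoryTheory Opposite
variable {R S : Type} [Ring R] [Ring S] {C : Set (ModuleCat R)} {D : Set (ModuleCat S)}
variable (d : ResolvingDuality C D)

lemma Gmap_bijective {X Y : (ResSub S D)ᵒᵖ} :
    Function.Bijective (d.G.map : (X ⟶ Y) → (d.G.obj X ⟶ d.G.obj Y)) := by
  have ff := (duEquiv d).symm.fullyFaithfulFunctor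
  constructor
  · intro f g h
    have h' : (duEquiv d).symm.functor.map f = (duEquiv d).symm.functor.map g := h
    have := congrArg ff.preimage h'
    rwa [ff.preimage_map, ff.preimage_map] at this
  · intro k
    exact ⟨ff.preimage k, ff.map_preimage k⟩

/-- The comparison `Y ≃ Hom_R(G Y, T)` for `Y ∈ D`. -/
noncomputable def mu {Y : ResSub S D} (y : Y.obj) : d.G.obj (op Y) ⟶ Tobj d :=
  d.G.map (tsp d y).op

lemma mu_bijective {Y : ResSub S D} : Function.Bijective (mu d (Y := Y)) := by
  have h1 : Function.Bijective (fun h : RD d ⟶ Y => h.op) :=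
    ⟨fun _ _ h => Quiver.Hom.op_inj h, fun k => ⟨k.unop, rfl⟩⟩
  exact (Gmap_bijective d).comp (h1.comp (tsp_bijective d))

lemma mu_natural {Y Y' : ResSub S D} (g : Y ⟶ Y') (y : Y.obj) :
    mu d (mp g y) = d.G.map g.op ≫ mu d y := by
  rw [mu, mu, tsp_post]
  have : (tsp d y ≫ g).op = g.op ≫ (tsp d y).op := rfl
  rw [this, d.G.map_comp]

lemma mu_zero {Y : ResSub S D} : mu d (0 : Y.obj) = 0 := by
  haveI := d.Gadd
  rw [mu, tsp_zero]
  have : ((0 : RD d ⟶ Y)).op = (0 : op Y ⟶ op (RD d)) := rfl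
  rw [this, Functor.map_zero]

/-- Surjectivity of restriction maps `Hom(Y,T) → Hom(X,T)` along the first map of a
short exact sequence in `C`. -/
lemma restrict_surj {X Y Z : ResSub R C} (f : X ⟶ Y) (g : Y ⟶ Z)
    (hses : IsSES R (mp f) (mp g)) :
    Function.Surjective (fun h : Y ⟶ Tobj d => f ≫ h) := by
  intro ξ
  have hFsurj : Function.Surjective (mp (d.F.map f.op)) :=
    (d.Fexact X Y Z f g hses).2.2
  obtain ⟨η, hη⟩ : ∃ η : RD d ⟶ d.F.obj (op X), hE d η = ξ :=
    ⟨(((duAdj d).homEquiv X (op (RD d))).symm ξ).unop, by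
      exact Equiv.apply_symm_apply _ ξ⟩
  obtain ⟨y0, hy0⟩ := hFsurj (mp η ((1 : S) : (RD d).obj))
  have hfac : tsp d y0 ≫ d.F.map f.op = η := by
    rw [← tsp_post d (d.F.map f.op) y0, hy0, tsp_of_eval]
  refine ⟨hE d (tsp d y0), ?_⟩
  show f ≫ hE d (tsp d y0) = ξ
  rw [hE_natural, hfac, hη]

lemma mpmu_surj {Y : ResSub S D} : Function.Surjective (fun y : Y.obj => mp (mu d y)) :=
  fun k => let ⟨y, hy⟩ := (mu_bijective d).2 (ObjectProperty.homMk k); ⟨y, congrArg mp hy⟩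

lemma mpmu_inj {Y : ResSub S D} : Function.Injective (fun y : Y.obj => mp (mu d y)) :=
  fun _ _ h => (mu_bijective d).1 (InducedCategory.hom_ext h)

end Gen4


section Gen5
open CategoryTheory Opposite
variable {R : Type} [Ring R] {M : ModuleCat R}

/-- The projection of a resolution term onto the corresponding syzygy. -/
noncomputable def resQ {C0 : Set (ModuleCat R)} (r : Resolution R C0 M) :
    ∀ i, r.X i ⟶ r.syzygy R i
  | 0 => r.ε
  | (j+1) => ModuleCat.ofHom (LinearMap.rangeRestrict (r.d j).hom)

/-- The inclusion of a syzygy into the resolution term. -/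
noncomputable def resI {C0 : Set (ModuleCat R)} (r : Resolution R C0 M) (i : ℕ) :
    (r.syzygy R (i+1) : ModuleCat R) ⟶ r.X i :=
  ModuleCat.ofHom (Submodule.subtype (LinearMap.range (r.d i).hom))

lemma resQ_surj {C0 : Set (ModuleCat R)} (r : Resolution R C0 M) (i : ℕ) :
    Function.Surjective (resQ r i) := by
  cases i with
  | zero => exact r.surj
  | succ j => exact LinearMap.surjective_rangeRestrict _

lemma resQ_ker {C0 : Set (ModuleCat R)} (r : Resolution R C0 M) (i : ℕ) :
    LinearMap.ker (resQ r i).hom = LinearMap.range (r.d i).hom := by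
  cases i with
  | zero => exact LinearMap.exact_iff.mp r.exact_zero
  | succ j =>
      rw [resQ]
      show LinearMap.ker (LinearMap.rangeRestrict (r.d j).hom) = _
      rw [LinearMap.ker_rangeRestrict]
      exact LinearMap.exact_iff.mp (r.exact_succ j)

lemma res_ses {C0 : Set (ModuleCat R)} (r : Resolution R C0 M) (i : ℕ) :
    IsSES R (resI r i) (resQ r i) := by
  refine ⟨Subtype.val_injective, ?_, resQ_surj r i⟩
  rw [LinearMap.exact_iff, resQ_ker]
  exact (Submodule.range_subtype _).symm

lemma dcomp_eq {C0 : Set (ModuleCat R)} (r : Resolution R C0 M) (i : ℕ) :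
    r.d i = ModuleCat.ofHom (LinearMap.rangeRestrict (r.d i).hom) ≫ resI r i := by
  apply ModuleCat.hom_ext; apply LinearMap.ext; intro x; rfl

variable {C : Set (ModuleCat R)}

lemma syzygy_mem (resC : IsResolving R C) (hM : M ∈ C)
    (r : Resolution R (projClass R) M) : ∀ i, (r.syzygy R i : ModuleCat R) ∈ C := by
  have hX : ∀ i, r.X i ∈ C := fun i =>
    resC.proj_mem _ (r.mem i).1 (r.mem i).2
  intro i
  induction i with
  | zero => exact hM
  | succ j ih =>
      exact resC.ker_closed _ _ _ (resI r j) (resQ r j) (res_ses r j) (hX j) ih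

end Gen5

section Gen6
open CategoryTheory Opposite
variable {R S : Type} [Ring R] [Ring S] {C : Set (ModuleCat R)} {D : Set (ModuleCat S)}
variable (d : ResolvingDuality C D)

lemma extVanish_of_mem {M : ModuleCat R} (hM : M ∈ C) :
    extVanish R M ((Wgen d).left) := by
  intro r i _
  have hX : ∀ j, r.X j ∈ C := fun j => d.resC.proj_mem _ (r.mem j).1 (r.mem j).2
  have hsy := syzygy_mem d.resC hM r
  intro g
  constructor
  · intro hg
    -- `g` kills the image of `r.d (i+1)`
    have h0 : r.d (i+1) ≫ g = 0 := hg
    have hg' : ∀ x, g (r.d (i+1) x) = 0 := fun x => by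
      have h1 := LinearMap.congr_fun (congrArg ModuleCat.Hom.hom h0) x
      simpa using h1
    have hker : LinearMap.ker (r.d i).hom ≤ LinearMap.ker g.hom := by
      rw [LinearMap.exact_iff.mp (r.exact_succ i)]
      rintro y ⟨x, rfl⟩
      exact hg' x
    -- factor `g` through the syzygy
    set e := LinearMap.quotKerEquivRange (r.d i).hom
    set g' := Submodule.liftQ (LinearMap.ker (r.d i).hom) g.hom hker
    set gbar := g'.comp e.symm.toLinearMap
    have hbar : ∀ x : r.X (i+1), gbar (LinearMap.rangeRestrict (r.d i).hom x) = g x := by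
      intro x
      have h1 : LinearMap.rangeRestrict (r.d i).hom x = e (Submodule.Quotient.mk x) := by
        apply Subtype.ext
        rw [LinearMap.quotKerEquivRange_apply_mk]
        rfl
      show g' (e.symm (LinearMap.rangeRestrict (r.d i).hom x)) = g x
      rw [h1, LinearEquiv.symm_apply_apply, Submodule.liftQ_apply]
    -- extend `gbar` along the inclusion into `r.X i` using the duality
    have hsurj := restrict_surj d
      (X := ⟨r.syzygy R (i+1), hsy (i+1)⟩) (Y := ⟨r.X i, hX i⟩) (Z := ⟨r.syzygy R i, hsy i⟩)
      (ObjectProperty.homMk (resI r i)) (ObjectProperty.homMk (resQ r i)) (res_ses r i)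
    obtain ⟨h, hh⟩ := hsurj (ObjectProperty.homMk (ModuleCat.ofHom gbar))
    refine ⟨(mp h : r.X i ⟶ (Wgen d).left), ?_⟩
    show r.d i ≫ mp h = g
    apply ModuleCat.hom_ext
    apply LinearMap.ext
    intro x
    have h2 : (r.d i) x = resI r i (LinearMap.rangeRestrict (r.d i).hom x) := rfl
    show mp h ((r.d i) x) = g x
    rw [h2]
    have h3 : mp h (resI r i (LinearMap.rangeRestrict (r.d i).hom x))
        = mp (ObjectProperty.homMk (resI r i) ≫ h : (⟨r.syzygy R (i+1), hsy (i+1)⟩ : ResSub R C) ⟶ Tobj d)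
            (LinearMap.rangeRestrict (r.d i).hom x) := rfl
    rw [h3]
    have hh' : (ObjectProperty.homMk (resI r i) ≫ h : (⟨r.syzygy R (i+1), hsy (i+1)⟩ : ResSub R C) ⟶ Tobj d)
        = ObjectProperty.homMk (ModuleCat.ofHom gbar) := hh
    rw [hh']
    exact hbar x
  · rintro ⟨h, rfl⟩
    have hz := (r.exact_succ i).apply_apply_eq_zero
    apply ModuleCat.hom_ext
    apply LinearMap.ext
    intro x
    show h ((r.d i) ((r.d (i+1)) x)) = 0
    rw [hz x]
    exact map_zero h.hom

end Gen6


section FRes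
open CategoryTheory Opposite
variable {S : Type} [Ring S] {D : Set (ModuleCat S)} (resD : IsResolving S D)

/-- Choice of a surjection from a finite free module, with kernel data. -/
noncomputable def stepSurj (K : ModuleCat S) (hK : K ∈ D) :
    Σ' (n : ℕ) (π : (Fin n → S) →ₗ[S] K),
      Function.Surjective π ∧ (ModuleCat.of S (LinearMap.ker π) ∈ D) := by
  haveI : Module.Finite S K := resD.fg K hK
  have e1 := Module.Finite.exists_fin' S K
  refine ⟨e1.choose, e1.choose_spec.choose, e1.choose_spec.choose_spec, ?_⟩
  set f := e1.choose_spec.choose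
  have hf : Function.Surjective f := e1.choose_spec.choose_spec
  have hfree : ModuleCat.of S (Fin e1.choose → S) ∈ D :=
    resD.proj_mem _ (inferInstanceAs (Module.Finite S (Fin e1.choose → S)))
      (inferInstanceAs (Module.Projective S (Fin e1.choose → S)))
  refine resD.ker_closed (ModuleCat.of S (LinearMap.ker f)) (ModuleCat.of S (Fin e1.choose → S)) K
    (ModuleCat.ofHom (Submodule.subtype (LinearMap.ker f)))
    (ModuleCat.ofHom f) ⟨Subtype.val_injective, ?_, hf⟩ hfree hK
  rw [LinearMap.exact_iff]
  exact (Submodule.range_subtype _).symm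

variable (N : ModuleCat S) (hN : N ∈ D)

/-- The tower of syzygies of `N` inside `D`. -/
noncomputable def tower : ℕ → Σ' (K : ModuleCat S), K ∈ D
  | 0 => ⟨N, hN⟩
  | (i+1) =>
      ⟨ModuleCat.of S (LinearMap.ker ((stepSurj resD (tower i).1 (tower i).2).2.1)),
        (stepSurj resD (tower i).1 (tower i).2).2.2.2⟩

/-- Rank of the `i`-th free module. -/
noncomputable def nn (i : ℕ) : ℕ := (stepSurj resD (tower resD N hN i).1 (tower resD N hN i).2).1

/-- The `i`-th free module. -/
noncomputable abbrev PP (i : ℕ) : ModuleCat S := ModuleCat.of S (Fin (nn resD N hN i) → S)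

lemma PP_mem (i : ℕ) : PP resD N hN i ∈ D :=
  resD.proj_mem _ (inferInstanceAs (Module.Finite S (Fin (nn resD N hN i) → S)))
    (inferInstanceAs (Module.Projective S (Fin (nn resD N hN i) → S)))

/-- The surjection onto the `i`-th syzygy, as a linear map. -/
noncomputable def piL (i : ℕ) : (Fin (nn resD N hN i) → S) →ₗ[S] (tower resD N hN i).1 :=
  (stepSurj resD (tower resD N hN i).1 (tower resD N hN i).2).2.1

/-- The surjection onto the `i`-th syzygy. -/
noncomputable def piP (i : ℕ) : PP resD N hN i ⟶ (tower resD N hN i).1 :=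
  ModuleCat.ofHom (piL resD N hN i)

lemma piP_surj (i : ℕ) : Function.Surjective (piP resD N hN i) :=
  (stepSurj resD (tower resD N hN i).1 (tower resD N hN i).2).2.2.1

lemma tower_succ (i : ℕ) :
    (tower resD N hN (i+1)).1 = ModuleCat.of S (LinearMap.ker (piL resD N hN i)) := rfl

/-- The inclusion of the `(i+1)`-st syzygy into the `i`-th free module. -/
noncomputable def iotaP (i : ℕ) : (tower resD N hN (i+1)).1 ⟶ PP resD N hN i :=
  ModuleCat.ofHom (Submodule.subtype (LinearMap.ker (piL resD N hN i)))

lemma iotaP_range (i : ℕ) :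
    LinearMap.range (iotaP resD N hN i).hom = LinearMap.ker (piP resD N hN i).hom :=
  Submodule.range_subtype _

lemma ses_P (i : ℕ) : IsSES S (iotaP resD N hN i) (piP resD N hN i) := by
  refine ⟨Subtype.val_injective, ?_, piP_surj resD N hN i⟩
  rw [LinearMap.exact_iff, iotaP_range]

/-- The differentials of the free resolution. -/
noncomputable def dPf (i : ℕ) : PP resD N hN (i+1) ⟶ PP resD N hN i :=
  piP resD N hN (i+1) ≫ iotaP resD N hN i

lemma dPf_range (i : ℕ) :
    LinearMap.range (dPf resD N hN i).hom = LinearMap.ker (piP resD N hN i).hom := by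
  rw [dPf]
  show LinearMap.range ((iotaP resD N hN i).hom.comp (piP resD N hN (i+1)).hom) = _
  rw [LinearMap.range_comp, LinearMap.range_eq_top.mpr (piP_surj resD N hN (i+1)),
    Submodule.map_top, iotaP_range]

lemma dPf_ker (i : ℕ) :
    LinearMap.ker (dPf resD N hN i).hom = LinearMap.ker (piP resD N hN (i+1)).hom := by
  rw [dPf]
  show LinearMap.ker ((iotaP resD N hN i).hom.comp (piP resD N hN (i+1)).hom) = _
  rw [LinearMap.ker_comp]
  have h : LinearMap.ker (iotaP resD N hN i).hom = ⊥ :=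
    LinearMap.ker_eq_bot.mpr Subtype.val_injective
  rw [h, Submodule.comap_bot]

/-- The free resolution of `N`. -/
noncomputable def freeRes : Resolution S (projClass S) N where
  X := PP resD N hN
  mem i := ⟨inferInstanceAs (Module.Finite S (Fin (nn resD N hN i) → S)),
    inferInstanceAs (Module.Projective S (Fin (nn resD N hN i) → S))⟩
  d := dPf resD N hN
  ε := piP resD N hN 0
  surj := piP_surj resD N hN 0
  exact_zero := by
    rw [LinearMap.exact_iff, dPf_range]
    rfl
  exact_succ i := by
    rw [LinearMap.exact_iff, dPf_range, dPf_ker]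

end FRes


section Gen7
open CategoryTheory Opposite
variable {R S : Type} [Ring R] [Ring S] {C : Set (ModuleCat R)} {D : Set (ModuleCat S)}
variable (d : ResolvingDuality C D)

/-- Reinterpret a morphism `T ⟶ X` in `C` as a linear map out of the bimodule carrier. -/
def linTo {X : ResSub R C} (f : Tobj d ⟶ X) : (Wgen d).T →ₗ[R] X.obj := (mp f).hom

lemma G_free_mem_add (n : ℕ) (hP : ModuleCat.of S (Fin n → S) ∈ D) :
    ((d.G.obj (op (⟨ModuleCat.of S (Fin n → S), hP⟩ : ResSub S D))).obj : ModuleCat R)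
      ∈ addClass R ((Wgen d).left) := by
  haveI := d.Gadd
  set P : ResSub S D := ⟨ModuleCat.of S (Fin n → S), hP⟩ with hPdef
  let ιk : Fin n → (RD d ⟶ P) := fun k => ObjectProperty.homMk (ModuleCat.ofHom (LinearMap.single S (fun _ => S) k))
  let πk : Fin n → (P ⟶ RD d) := fun k => ObjectProperty.homMk (ModuleCat.ofHom (LinearMap.proj k))
  have hlin : (∑ k : Fin n, (LinearMap.single S (fun _ : Fin n => S) k) ∘ₗ
      (LinearMap.proj (φ := fun _ : Fin n => S) k)) = LinearMap.id := by
    apply LinearMap.ext; intro x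
    rw [LinearMap.sum_apply]
    show (∑ k : Fin n, Pi.single k (x k)) = x
    exact Finset.univ_sum_single x
  have hid : (∑ k, πk k ≫ ιk k) = 𝟙 P := by
    apply InducedCategory.hom_ext; apply ModuleCat.hom_ext
    rw [show (∑ k, πk k ≫ ιk k).hom = ∑ k, (πk k ≫ ιk k).hom from
      map_sum InducedCategory.homAddEquiv _ _, ModuleCat.hom_sum]
    exact hlin
  have hGid : (∑ k, d.G.map ((πk k ≫ ιk k).op)) = 𝟙 (d.G.obj (op P)) := by
    have h1 : (∑ k, d.G.map ((πk k ≫ ιk k).op)) = d.G.map (∑ k, ((πk k ≫ ιk k).op)) :=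
      (map_sum d.G.mapAddHom _ _).symm
    rw [h1, ← op_sum, hid, op_id, d.G.map_id]
  refine ⟨n, ModuleCat.ofHom (LinearMap.pi (fun k => toLin d (d.G.map (ιk k).op))),
    ModuleCat.ofHom (∑ k, (linTo d (d.G.map (πk k).op)).comp
      (LinearMap.proj (φ := fun _ : Fin n => (Wgen d).T) k)), ?_⟩
  apply ModuleCat.hom_ext
  apply LinearMap.ext
  intro x
  show (∑ k, (linTo d (d.G.map (πk k).op)).comp
      (LinearMap.proj (φ := fun _ : Fin n => (Wgen d).T) k))
      ((LinearMap.pi (fun k => toLin d (d.G.map (ιk k).op))) x) = x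
  rw [LinearMap.sum_apply]
  have hx : ∀ k : Fin n, ((linTo d (d.G.map (πk k).op)).comp
      (LinearMap.proj (φ := fun _ : Fin n => (Wgen d).T) k))
      ((LinearMap.pi (fun k => toLin d (d.G.map (ιk k).op))) x)
      = mp (d.G.map ((πk k ≫ ιk k).op)) x := by
    intro k
    have h2 : d.G.map ((πk k ≫ ιk k).op) = d.G.map ((ιk k).op) ≫ d.G.map ((πk k).op) := by
      rw [← d.G.map_comp]; rfl
    rw [h2]; rfl
  rw [Finset.sum_congr rfl (fun k _ => hx k)]
  have hsum : (∑ k, mp (d.G.map ((πk k ≫ ιk k).op)) x)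
      = (∑ k, (mp (d.G.map ((πk k ≫ ιk k).op))
          : (d.G.obj (op P)).obj ⟶ (d.G.obj (op P)).obj)) x :=
    by rw [← LinearMap.sum_apply]; exact congrArg (fun f : (d.G.obj (op P)).obj →ₗ[R] (d.G.obj (op P)).obj => f x) (ModuleCat.hom_sum (fun k => mp (d.G.map ((πk k ≫ ιk k).op))) Finset.univ).symm
  rw [hsum]
  have hmp : (∑ k, (mp (d.G.map ((πk k ≫ ιk k).op))
      : (d.G.obj (op P)).obj ⟶ (d.G.obj (op P)).obj))
      = mp (∑ k, d.G.map ((πk k ≫ ιk k).op)) := (map_sum InducedCategory.homAddEquiv _ _).symm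
  rw [hmp, hGid]
  rfl

lemma cogen_of_mem {M : ModuleCat R} (hM : M ∈ C) :
    M ∈ cogenStar R ((Wgen d).left) := by
  haveI := d.Gadd
  set X0 : ResSub R C := ⟨M, hM⟩ with hX0
  set N : ResSub S D := d.F.obj (op X0) with hN
  let tw := tower d.resD N.obj N.property
  let KO : ℕ → ResSub S D := fun i => ⟨(tw i).1, (tw i).2⟩
  let PO : ℕ → ResSub S D := fun i =>
    ⟨PP d.resD N.obj N.property i, PP_mem d.resD N.obj N.property i⟩
  let ιS : ∀ i, KO (i+1) ⟶ PO i := fun i => ObjectProperty.homMk (iotaP d.resD N.obj N.property i)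
  let πS : ∀ i, PO i ⟶ KO i := fun i => ObjectProperty.homMk (piP d.resD N.obj N.property i)
  let dS : ∀ i, PO (i+1) ⟶ PO i := fun i => ObjectProperty.homMk (dPf d.resD N.obj N.property i)
  have ses : ∀ i, IsSES S (mp (ιS i)) (mp (πS i)) := fun i => ses_P d.resD N.obj N.property i
  have gses := fun i => d.Gexact (KO (i+1)) (PO i) (KO i) (ιS i) (πS i) (ses i)
  let u : X0 ⟶ d.G.obj (op (KO 0)) := (d.GF.some.app X0).inv
  have hu : Function.Bijective (mp u) := by
    refine Function.bijective_iff_has_inverse.mpr ⟨mp (d.GF.some.app X0).hom, fun x => ?_, fun x => ?_⟩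
    · show mp (u ≫ (d.GF.some.app X0).hom) x = x
      have h1 : u ≫ (d.GF.some.app X0).hom = 𝟙 X0 := Iso.inv_hom_id _
      rw [h1]; rfl
    · show mp ((d.GF.some.app X0).hom ≫ u) x = x
      have h1 : (d.GF.some.app X0).hom ≫ u = 𝟙 _ := Iso.hom_inv_id _
      rw [h1]; rfl
  have hfactor : ∀ i, d.G.map (dS i).op
      = d.G.map ((ιS i)).op ≫ d.G.map ((πS (i+1))).op := by
    intro i
    rw [← d.G.map_comp]
    rfl
  -- the coresolution
  refine ⟨{ X := fun i => (d.G.obj (op (PO i))).obj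
            mem := fun i => G_free_mem_add d _ _
            η := mp (u ≫ d.G.map (πS 0).op)
            d := fun i => mp (d.G.map (dS i).op)
            inj := ?_
            exact_zero := ?_
            exact_succ := ?_ }, ?_, ?_, ?_⟩
  · exact ((gses 0).1).comp hu.1
  · have h := exact_comp_of_exact (f := ⇑(mp (d.G.map (πS 0).op)))
      (g := ⇑(mp (d.G.map (ιS 0).op))) (p := ⇑(mp u)) (i := ⇑(mp (d.G.map (πS 1).op)))
      hu.2 (gses 1).1 (map_zero _) (gses 0).2.1
    show Function.Exact ⇑(mp (u ≫ d.G.map (πS 0).op)) ⇑(mp (d.G.map (dS 0).op))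
    rw [hfactor 0]
    exact h
  · intro i
    have h := exact_comp_of_exact (f := ⇑(mp (d.G.map (πS (i+1)).op)))
      (g := ⇑(mp (d.G.map (ιS (i+1)).op))) (p := ⇑(mp (d.G.map (ιS i).op)))
      (i := ⇑(mp (d.G.map (πS (i+2)).op)))
      (gses i).2.2 (gses (i+2)).1 (map_zero _) (gses (i+1)).2.1
    show Function.Exact ⇑(mp (d.G.map (dS i).op)) ⇑(mp (d.G.map (dS (i+1)).op))
    rw [hfactor i, hfactor (i+1)]
    exact h
  -- HomExact, part 1: surjectivity
  · intro ξ
    have hpre : Function.Bijective (fun h : d.G.obj (op (KO 0)) ⟶ Tobj d => u ≫ h) := by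
      refine Function.bijective_iff_has_inverse.mpr
        ⟨fun k => (d.GF.some.app X0).hom ≫ k, fun h => ?_, fun k => ?_⟩
      · show (d.GF.some.app X0).hom ≫ (u ≫ h) = h
        exact (Category.assoc _ _ _).symm.trans
          ((congrArg (· ≫ h) (Iso.hom_inv_id (d.GF.some.app X0))).trans (Category.id_comp h))
      · show u ≫ ((d.GF.some.app X0).hom ≫ k) = k
        exact (Category.assoc _ _ _).symm.trans
          ((congrArg (· ≫ k) (Iso.inv_hom_id (d.GF.some.app X0))).trans (Category.id_comp k))
    obtain ⟨k, hk⟩ := hpre.2 (ObjectProperty.homMk ξ)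
    obtain ⟨z, hz⟩ := (mu_bijective d (Y := KO 0)).2 k
    obtain ⟨y, hy⟩ := piP_surj d.resD N.obj N.property 0 z
    refine ⟨mp (mu d (Y := PO 0) y), ?_⟩
    show mp (u ≫ d.G.map (πS 0).op) ≫ mp (mu d y) = ξ
    have h1 : (u ≫ d.G.map (πS 0).op) ≫ mu d y = u ≫ mu d (mp (πS 0) y) := by
      rw [Category.assoc, ← mu_natural]
    have h2 : mp (πS 0) y = z := hy
    show mp ((u ≫ d.G.map (πS 0).op) ≫ mu d y) = ξ
    rw [h1, h2, hz]
    exact congrArg mp hk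
  -- HomExact, part 2: exactness at spot 0
  · have hinj3 : Function.Injective (fun z : (KO 0).obj => mp (u ≫ mu d z)) := by
      intro z z' hzz
      apply (mu_bijective d (Y := KO 0)).1
      have h4 := congrArg (fun k => (d.GF.some.app X0).hom ≫ k)
        (InducedCategory.hom_ext hzz : u ≫ mu d z = u ≫ mu d z')
      have h5 : (d.GF.some.app X0).hom ≫ u = 𝟙 _ := Iso.hom_inv_id _
      rw [← Category.assoc, ← Category.assoc, h5] at h4
      exact (Category.id_comp _).symm.trans (h4.trans (Category.id_comp _))
    refine exact_transport (f := ⇑(dPf d.resD N.obj N.property 0))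
      (g := ⇑(piP d.resD N.obj N.property 0))
      (e1 := fun y : (PO 1).obj => mp (mu d y))
      (e2 := Equiv.ofBijective _ ⟨mpmu_inj d (Y := PO 0), mpmu_surj d (Y := PO 0)⟩)
      (e3 := fun z : (KO 0).obj => mp (u ≫ mu d z))
      (mpmu_surj d) hinj3 ?_ ?_ ?_ (freeRes d.resD N.obj N.property).exact_zero
    · show mp (u ≫ mu d (0 : (KO 0).obj)) = 0
      rw [mu_zero, Limits.comp_zero]
      rfl
    · intro a
      show mp (d.G.map (dS 0).op) ≫ mp (mu d a) = mp (mu d (mp (dS 0) a))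
      rw [mu_natural]
      rfl
    · intro b
      show mp (u ≫ d.G.map (πS 0).op) ≫ mp (mu d b) = mp (u ≫ mu d (mp (πS 0) b))
      show mp ((u ≫ d.G.map (πS 0).op) ≫ mu d b) = mp (u ≫ mu d (mp (πS 0) b))
      rw [Category.assoc, ← mu_natural]
  -- HomExact, part 3
  · intro i
    refine exact_transport (f := ⇑(dPf d.resD N.obj N.property (i+1)))
      (g := ⇑(dPf d.resD N.obj N.property i))
      (e1 := fun y : (PO (i+2)).obj => mp (mu d y))
      (e2 := Equiv.ofBijective _ ⟨mpmu_inj d (Y := PO (i+1)), mpmu_surj d (Y := PO (i+1))⟩)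
      (e3 := fun z : (PO i).obj => mp (mu d z))
      (mpmu_surj d) (mpmu_inj d) (by show mp (mu d 0) = 0; rw [mu_zero]; rfl) ?_ ?_
      ((freeRes d.resD N.obj N.property).exact_succ i)
    · intro a
      show mp (d.G.map (dS (i+1)).op) ≫ mp (mu d a) = mp (mu d (mp (dS (i+1)) a))
      rw [mu_natural]
      rfl
    · intro b
      show mp (d.G.map (dS i).op) ≫ mp (mu d b) = mp (mu d (mp (dS i) b))
      rw [mu_natural]
      rfl

end Gen7


section Gen8
open CategoryTheory Opposite
variable {R S : Type} [Ring R] [Ring S] {C : Set (ModuleCat R)} {D : Set (ModuleCat S)}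

/-- The flipped resolving duality. -/
noncomputable def flipDu (d : ResolvingDuality C D) : ResolvingDuality D C where
  resC := d.resD
  resD := d.resC
  F := d.G
  G := d.F
  Fadd := d.Gadd
  Gadd := d.Fadd
  Fexact := d.Gexact
  Gexact := d.Fexact
  GF := d.FG
  FG := d.GF

variable (d : ResolvingDuality C D)

/-- Right multiplication on the regular module of `R`. -/
def rmulC (a : R) : RC d ⟶ RC d := ObjectProperty.homMk (ModuleCat.ofHom (rmL a))

lemma psi_flip (a : R) : psi (flipDu d) a = d.F.map (rmulC d a).op := rfl

/-- Evaluation at `1` of linear maps out of the regular module. -/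
noncomputable def evalRC : ((RC d).obj →ₗ[R] (Wgen d).T) ≃ₗ[S] (Wgen d).T :=
  LinearMap.ringLmapEquivSelf R S ((Wgen d).T)

lemma theta_eval_smul (a : R) (y : (d.F.obj (op (RC d))).obj) :
    evalRC d (theta d (RC d) (mp (d.F.map (rmulC d a).op) y))
      = a • (evalRC d (theta d (RC d) y)) := by
  have h1 := theta_natural d (rmulC d a) y
  rw [h1]
  show ((theta d (RC d) y).comp (mp (rmulC d a)).hom) (1 : R) = a • (theta d (RC d) y) (1 : R)
  have h2 : mp (rmulC d a) ((1 : R) : (RC d).obj) = a • ((1 : R) : (RC d).obj) := by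
    show (1 : R) * a = a • (1 : R)
    rw [smul_eq_mul, one_mul, mul_one]
  show (theta d (RC d) y) (mp (rmulC d a) ((1 : R) : (RC d).obj)) = _
  rw [h2, map_smul]

/-- The `S`-linear comparison `T ≃ F(R)`. -/
noncomputable def eT : (Wgen d).T ≃ₗ[S] ((d.F.obj (op (RC d))).obj : Type) :=
  ((theta d (RC d)).trans (evalRC d)).symm

lemma eT_equivariant (a : R) (t : (Wgen d).T) :
    eT d (a • t) = mp (d.F.map (rmulC d a).op) (eT d t) := by
  apply ((theta d (RC d)).trans (evalRC d)).injective
  have h1 : ((theta d (RC d)).trans (evalRC d)) (eT d (a • t)) = a • t :=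
    ((theta d (RC d)).trans (evalRC d)).apply_symm_apply _
  have h2 : ((theta d (RC d)).trans (evalRC d))
      (mp (d.F.map (rmulC d a).op) (eT d t)) = a • t := by
    show evalRC d (theta d (RC d) (mp (d.F.map (rmulC d a).op) (eT d t))) = a • t
    rw [theta_eval_smul]
    have h4 : evalRC d (theta d (RC d) (eT d t)) = t :=
      ((theta d (RC d)).trans (evalRC d)).apply_symm_apply t
    show a • evalRC d (theta d (RC d) (eT d t)) = a • t
    rw [h4]
  rw [h1, h2]

/-- The natural isomorphism `F ≅ Hom(-, T)`. -/
noncomputable def FhomIso :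
    d.F ⋙ ObjectProperty.ι (fun N : ModuleCat S => N ∈ D) ≅
      (ObjectProperty.ι (fun M : ModuleCat R => M ∈ C)).op ⋙ (Wgen d).homFunctor :=
  NatIso.ofComponents (fun X => (theta d X.unop).toModuleIso) (by
    intro X Y f
    apply ModuleCat.hom_ext
    apply LinearMap.ext
    intro y
    exact theta_natural d f.unop y)

end Gen8


section Gen9
open CategoryTheory Opposite
variable {R S : Type} [Ring R] [Ring S] {C : Set (ModuleCat R)} {D : Set (ModuleCat S)}
variable (d : ResolvingDuality C D)

lemma rmulM_eq_tsp (b : S) : rmulM d b = tsp d (Y := RD d) b := by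
  apply mp_inj; apply ModuleCat.hom_ext; apply LinearMap.ext; intro x
  show (show S from x) * b = (show S from x) • b
  rw [smul_eq_mul]

lemma rmulM_bijective : Function.Bijective (rmulM d) := by
  have h : (rmulM d : S → (RD d ⟶ RD d)) = fun b => tsp d (Y := RD d) b :=
    funext (rmulM_eq_tsp d)
  rw [h]
  exact tsp_bijective d

lemma rightAction_bijective : Function.Bijective ((Wgen d).rightAction) := by
  have h1 : ((Wgen d).rightAction) = fun b => toLin d (psi d b) := by
    funext b
    apply LinearMap.ext
    intro t
    rfl
  rw [h1]
  have h2 : (fun b => toLin d (psi d b)) = toLin d ∘ ((fun (k : op (RD d) ⟶ op (RD d)) => d.G.map k) ∘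
      ((fun (f : RD d ⟶ RD d) => f.op) ∘ (rmulM d))) := rfl
  rw [h2]
  have hop : Function.Bijective (fun (f : RD d ⟶ RD d) => f.op) :=
    ⟨fun _ _ h => Quiver.Hom.op_inj h, fun k => ⟨k.unop, rfl⟩⟩
  exact (toLin_bijective d).comp ((Gmap_bijective d).comp (hop.comp (rmulM_bijective d)))

lemma rmulC_bijective : Function.Bijective (rmulC d) := by
  have h : Function.Bijective (rmulM (flipDu d)) := rmulM_bijective (flipDu d)
  exact h

/-- Conjugation by `eT`. -/
noncomputable def conjE :
    ((d.F.obj (op (RC d))) ⟶ (d.F.obj (op (RC d)))) ≃ ((Wgen d).T →ₗ[S] (Wgen d).T) where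
  toFun φ := (eT d).symm.toLinearMap ∘ₗ ((mp φ).hom ∘ₗ (eT d).toLinearMap)
  invFun ψ := ObjectProperty.homMk (ModuleCat.ofHom ((eT d).toLinearMap ∘ₗ (ψ ∘ₗ (eT d).symm.toLinearMap)))
  left_inv φ := by
    apply mp_inj
    apply ModuleCat.hom_ext
    apply LinearMap.ext
    intro x
    show eT d ((eT d).symm (mp φ (eT d ((eT d).symm x)))) = mp φ x
    rw [LinearEquiv.apply_symm_apply, LinearEquiv.apply_symm_apply]
  right_inv ψ := by
    apply LinearMap.ext
    intro t
    show (eT d).symm (eT d (ψ ((eT d).symm (eT d t)))) = ψ t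
    rw [LinearEquiv.symm_apply_apply, LinearEquiv.symm_apply_apply]

lemma leftAction_bijective : Function.Bijective ((Wgen d).leftAction) := by
  have h1 : ((Wgen d).leftAction) = (conjE d) ∘
      ((fun (h : RC d ⟶ RC d) => d.F.map h.op) ∘ (rmulC d)) := by
    funext a
    apply LinearMap.ext
    intro t
    show a • t = (eT d).symm (mp (d.F.map (rmulC d a).op) (eT d t))
    rw [← eT_equivariant, LinearEquiv.symm_apply_apply]
  rw [h1]
  have hop : Function.Bijective (fun (f : RC d ⟶ RC d) => f.op) :=
    ⟨fun _ _ h => Quiver.Hom.op_inj h, fun k => ⟨k.unop, rfl⟩⟩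
  have hF : Function.Bijective (fun (h : RC d ⟶ RC d) => d.F.map h.op) := by
    have hG := Gmap_bijective (flipDu d) (X := op (RC d)) (Y := op (RC d))
    exact hG.comp hop
  exact (conjE d).bijective.comp (hF.comp (rmulC_bijective d))

lemma wgen_balanced : (Wgen d).IsFaithfullyBalanced :=
  ⟨leftAction_bijective d, rightAction_bijective d⟩

end Gen9


section Trans
open CategoryTheory
variable {R : Type} [Ring R]

/-- Post-composition with a linear equivalence. -/
noncomputable def postEquiv {M T T' : ModuleCat R} (e : T ≃ₗ[R] T') :
    (M ⟶ T) ≃ (M ⟶ T') where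
  toFun g := ModuleCat.ofHom (e.toLinearMap ∘ₗ g.hom)
  invFun g := ModuleCat.ofHom (e.symm.toLinearMap ∘ₗ g.hom)
  left_inv g := by apply ModuleCat.hom_ext; apply LinearMap.ext; intro x; exact e.symm_apply_apply (g x)
  right_inv g := by apply ModuleCat.hom_ext; apply LinearMap.ext; intro x; exact e.apply_symm_apply (g x)

lemma postEquiv_zero {M T T' : ModuleCat R} (e : T ≃ₗ[R] T') :
    postEquiv (M := M) e 0 = 0 := by
  apply ModuleCat.hom_ext; apply LinearMap.ext; intro x
  show e ((0 : M ⟶ T) x) = 0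
  show e 0 = 0
  exact map_zero _

lemma extVanish_congr_right {M T T' : ModuleCat R} (e : T ≃ₗ[R] T')
    (h : extVanish R M T) : extVanish R M T' := by
  intro r i hi
  exact exact_transport (e1 := ⇑(postEquiv (M := r.X i) e))
    (e2 := postEquiv (M := r.X (i+1)) e) (e3 := ⇑(postEquiv (M := r.X (i+1+1)) e))
    (postEquiv e).surjective (postEquiv e).injective (postEquiv_zero e)
    (fun a => by apply ModuleCat.hom_ext; apply LinearMap.ext; intro x; rfl)
    (fun b => by apply ModuleCat.hom_ext; apply LinearMap.ext; intro x; rfl) (h r i hi)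

lemma extVanish_congr_left {M M' T : ModuleCat R} (e : M ≃ₗ[R] M')
    (h : extVanish R M T) : extVanish R M' T := by
  intro r' i hi
  let hres : Resolution R (projClass R) M :=
    { X := r'.X, mem := r'.mem, d := r'.d
      ε := ModuleCat.ofHom (e.symm.toLinearMap ∘ₗ r'.ε.hom)
      surj := e.symm.surjective.comp r'.surj
      exact_zero := by
        intro y
        have h1 : e.symm (r'.ε y) = 0 ↔ r'.ε y = 0 := by
          constructor
          · intro hy
            have h2 := congrArg e hy
            rw [e.apply_symm_apply] at h2
            rw [h2]
            exact map_zero _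
          · intro hy
            rw [hy]
            exact map_zero _
        exact h1.trans (r'.exact_zero y)
      exact_succ := r'.exact_succ }
  exact h hres i hi

lemma addClass_congr {T T' M : ModuleCat R} (e : T ≃ₗ[R] T')
    (h : M ∈ addClass R T) : M ∈ addClass R T' := by
  obtain ⟨n, s, p, hsp⟩ := h
  refine ⟨n, s ≫ ModuleCat.ofHom (LinearMap.pi
      (fun k => e.toLinearMap ∘ₗ LinearMap.proj (φ := fun _ : Fin n => T) k)),
    ModuleCat.ofHom (LinearMap.pi
      (fun k => e.symm.toLinearMap ∘ₗ LinearMap.proj (φ := fun _ : Fin n => T') k)) ≫ p, ?_⟩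
  apply ModuleCat.hom_ext; apply LinearMap.ext
  intro x
  have hmid : (LinearMap.pi
      (fun k => e.symm.toLinearMap ∘ₗ LinearMap.proj (φ := fun _ : Fin n => T') k))
      ((LinearMap.pi
        (fun k => e.toLinearMap ∘ₗ LinearMap.proj (φ := fun _ : Fin n => T) k)) (s x))
      = s x := by
    funext k
    exact e.symm_apply_apply _
  show p ((LinearMap.pi
      (fun k => e.symm.toLinearMap ∘ₗ LinearMap.proj (φ := fun _ : Fin n => T') k))
      ((LinearMap.pi
        (fun k => e.toLinearMap ∘ₗ LinearMap.proj (φ := fun _ : Fin n => T) k)) (s x))) = x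
  rw [hmid]
  exact LinearMap.congr_fun (congrArg ModuleCat.Hom.hom hsp) x

lemma cogen_congr_right {M T T' : ModuleCat R} (e : T ≃ₗ[R] T')
    (h : M ∈ cogenStar R T) : M ∈ cogenStar R T' := by
  obtain ⟨c, hc1, hc2, hc3⟩ := h
  refine ⟨{ X := c.X, mem := fun i => addClass_congr e (c.mem i), η := c.η, d := c.d
            inj := c.inj, exact_zero := c.exact_zero, exact_succ := c.exact_succ },
    ?_, ?_, ?_⟩
  · intro ξ
    obtain ⟨g, hg⟩ := hc1 (ModuleCat.ofHom (e.symm.toLinearMap ∘ₗ ξ.hom))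
    refine ⟨ModuleCat.ofHom (e.toLinearMap ∘ₗ g.hom), ?_⟩
    apply ModuleCat.hom_ext; apply LinearMap.ext; intro x
    show e (g (c.η x)) = ξ x
    have h2 : g (c.η x) = e.symm (ξ x) := LinearMap.congr_fun (congrArg ModuleCat.Hom.hom hg) x
    rw [h2, e.apply_symm_apply]
  · exact exact_transport (e1 := ⇑(postEquiv (M := c.X 1) e))
      (e2 := postEquiv (M := c.X 0) e) (e3 := ⇑(postEquiv (M := M) e))
      (postEquiv e).surjective (postEquiv e).injective (postEquiv_zero e)
      (fun a => by apply ModuleCat.hom_ext; apply LinearMap.ext; intro x; rfl)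
      (fun b => by apply ModuleCat.hom_ext; apply LinearMap.ext; intro x; rfl) hc2
  · intro i
    exact exact_transport (e1 := ⇑(postEquiv (M := c.X (i+1+1)) e))
      (e2 := postEquiv (M := c.X (i+1)) e) (e3 := ⇑(postEquiv (M := c.X i) e))
      (postEquiv e).surjective (postEquiv e).injective (postEquiv_zero e)
      (fun a => by apply ModuleCat.hom_ext; apply LinearMap.ext; intro x; rfl)
      (fun b => by apply ModuleCat.hom_ext; apply LinearMap.ext; intro x; rfl) (hc3 i)

lemma cogen_congr_left {M M' T : ModuleCat R} (e : M ≃ₗ[R] M')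
    (h : M ∈ cogenStar R T) : M' ∈ cogenStar R T := by
  obtain ⟨c, hc1, hc2, hc3⟩ := h
  have hpre_inj : Function.Injective
      (fun h : (M : ModuleCat R) ⟶ T => ModuleCat.ofHom (h.hom ∘ₗ e.symm.toLinearMap)) := by
    intro h h' hh
    apply ModuleCat.hom_ext; apply LinearMap.ext
    intro x
    have h3 := LinearMap.congr_fun (congrArg ModuleCat.Hom.hom hh) (e x)
    show h x = h' x
    have h4 : h (e.symm (e x)) = h' (e.symm (e x)) := h3
    rwa [e.symm_apply_apply] at h4
  refine ⟨{ X := c.X, mem := c.mem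
            η := ModuleCat.ofHom (c.η.hom ∘ₗ e.symm.toLinearMap)
            d := c.d
            inj := c.inj.comp e.symm.injective
            exact_zero := ?_
            exact_succ := c.exact_succ },
    ?_, ?_, ?_⟩
  · have h := exact_comp_of_exact (p := ⇑(e.symm)) (i := @id (c.X 1))
      e.symm.surjective Function.injective_id rfl c.exact_zero
    exact h
  · intro ξ
    obtain ⟨g, hg⟩ := hc1 (ModuleCat.ofHom (ξ.hom ∘ₗ e.toLinearMap))
    refine ⟨g, ?_⟩
    apply ModuleCat.hom_ext; apply LinearMap.ext; intro x
    show g (c.η (e.symm x)) = ξ x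
    have h2 : g (c.η (e.symm x)) = ξ (e (e.symm x)) := LinearMap.congr_fun (congrArg ModuleCat.Hom.hom hg) (e.symm x)
    rw [h2, e.apply_symm_apply]
  · refine exact_transport (e1 := @id (c.X 1 ⟶ T)) (e2 := Equiv.refl (c.X 0 ⟶ T))
      (e3 := fun h : (M : ModuleCat R) ⟶ T => ModuleCat.ofHom (h.hom ∘ₗ e.symm.toLinearMap))
      Function.surjective_id hpre_inj ?_ (fun a => rfl) ?_ hc2
    · apply ModuleCat.hom_ext; apply LinearMap.ext; intro x; rfl
    · intro b
      apply ModuleCat.hom_ext; apply LinearMap.ext; intro x; rfl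
  · exact hc3

lemma wclass_congr_right {M T T' : ModuleCat R} (e : T ≃ₗ[R] T')
    (h : M ∈ WClass R T) : M ∈ WClass R T' :=
  ⟨extVanish_congr_right e h.1, cogen_congr_right e h.2⟩

lemma wclass_congr_left {M M' T : ModuleCat R} (e : M ≃ₗ[R] M')
    (h : M ∈ WClass R T) : M' ∈ WClass R T :=
  ⟨extVanish_congr_left e h.1, cogen_congr_left e h.2⟩

lemma wak_congr {T T' : ModuleCat R} (e : T ≃ₗ[R] T')
    (h : IsWakamatsuTilting R T) : IsWakamatsuTilting R T' := by
  refine ⟨?_, wclass_congr_right e h.2.1, wclass_congr_left e (wclass_congr_right e h.2.2)⟩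
  haveI := h.1
  exact Module.Finite.equiv e

end Trans


section Gen10
open CategoryTheory Opposite
variable {R S : Type} [Ring R] [Ring S] {C : Set (ModuleCat R)} {D : Set (ModuleCat S)}
variable (d : ResolvingDuality C D)

lemma wclass_of_mem {M : ModuleCat R} (hM : M ∈ C) : M ∈ WClass R ((Wgen d).left) :=
  ⟨extVanish_of_mem d hM, cogen_of_mem d hM⟩

lemma wak_left : IsWakamatsuTilting R ((Wgen d).left) := by
  refine ⟨?_, wclass_of_mem d (RC d).property, wclass_of_mem d (Tobj d).property⟩
  exact d.resC.fg _ (Tobj d).property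

/-- Transport of hom functors along a bimodule isomorphism. -/
noncomputable def homFunctorIso {P Q : Type} [Ring P] [Ring Q] (V1 V2 : BimoduleOver P Q)
    (e : V1.T ≃ₗ[P] V2.T) (heq : ∀ (q : Q) (t : V1.T), e (q • t) = q • e t) :
    V1.homFunctor ≅ V2.homFunctor :=
  NatIso.ofComponents (fun X => LinearEquiv.toModuleIso
    { toFun := fun g : X.unop →ₗ[P] V1.T => e.toLinearMap ∘ₗ g
      map_add' := fun g g' => LinearMap.ext fun x => map_add e _ _
      map_smul' := fun q g => LinearMap.ext fun x => heq q (g x)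
      invFun := fun g => e.symm.toLinearMap ∘ₗ g
      left_inv := fun g => LinearMap.ext fun x => e.symm_apply_apply _
      right_inv := fun g => LinearMap.ext fun x => e.apply_symm_apply _ })
    (by
      intro X Y f
      apply ModuleCat.hom_ext
      apply LinearMap.ext
      intro g
      apply LinearMap.ext
      intro x
      rfl)

end Gen10

end S7
/-- Inverse resolving dualities `F : C → D`, `G : D → C` between
resolving subcategories `C ⊆ A`-mod and `D ⊆ B^{op}`-mod are afforded by a Wakamatsu
tilting `A`-`B`-bimodule `T` with `T ≅ G(B)` as a left `A`-module and `T ≅ F(A)` as a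
right `B`-module; moreover `F ≅ Hom_A(-,T)|_C`, `G ≅ Hom_{B^{op}}(-,T)|_D`, and
`C ⊆ W(_AT)`, `D ⊆ W(T_B)`. -/
theorem stmt7 (A B : Type) [Ring A] [Ring B] [IsArtinianRing A] [IsArtinianRing B]
    (C : Set (ModuleCat A)) (D : Set (ModuleCat Bᵐᵒᵖ))
    (dl : ResolvingDuality C D) :
    ∃ W : BimoduleOver A Bᵐᵒᵖ,
      W.IsWakamatsuTiltingBimodule ∧
      Nonempty (W.right ≅ (dl.F.obj (Opposite.op (regularObj dl.resC))).obj) ∧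
      Nonempty (W.left ≅ (dl.G.obj (Opposite.op (regularObj dl.resD))).obj) ∧
      Nonempty (dl.F ⋙ ObjectProperty.ι (fun N : ModuleCat Bᵐᵒᵖ => N ∈ D) ≅
        (ObjectProperty.ι (fun M : ModuleCat A => M ∈ C)).op ⋙ W.homFunctor) ∧
      Nonempty (dl.G ⋙ ObjectProperty.ι (fun M : ModuleCat A => M ∈ C) ≅
        (ObjectProperty.ι (fun N : ModuleCat Bᵐᵒᵖ => N ∈ D)).op ⋙
          W.flip.homFunctor) ∧
      (∀ M ∈ C, M ∈ WClass A W.left) ∧ (∀ N ∈ D, N ∈ WClass Bᵐᵒᵖ W.right) := by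
  classical
  let eflip : (S7.Wgen dl).T ≃ₗ[Bᵐᵒᵖ] (S7.Wgen (S7.flipDu dl)).T := S7.eT dl
  have heq : ∀ (a : A) (t : (S7.Wgen (S7.flipDu dl)).T),
      eflip.symm (a • t) = a • eflip.symm t := by
    intro a t
    apply eflip.injective
    rw [LinearEquiv.apply_symm_apply]
    have h1 := S7.eT_equivariant dl a (eflip.symm t)
    have h2 : S7.mp (dl.F.map (S7.rmulC dl a).op) t = a • t := rfl
    have h3 : S7.eT dl (eflip.symm t) = t := eflip.apply_symm_apply t
    rw [h3] at h1
    exact (h2.symm.trans h1.symm : a • t = _)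
  refine ⟨S7.Wgen dl, ⟨S7.wgen_balanced dl, S7.wak_left dl, ?_⟩, ⟨?_⟩, ⟨Iso.refl _⟩,
    ⟨S7.FhomIso dl⟩, ⟨?_⟩, fun M hM => S7.wclass_of_mem dl hM, fun N hN => ?_⟩
  · exact S7.wak_congr eflip.symm (S7.wak_left (S7.flipDu dl))
  · exact eflip.toModuleIso
  · exact (S7.FhomIso (S7.flipDu dl)) ≪≫ Functor.isoWhiskerLeft (ObjectProperty.ι _).op
      (S7.homFunctorIso (S7.Wgen (S7.flipDu dl)) ((S7.Wgen dl).flip) eflip.symm heq)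
  · exact S7.wclass_congr_right eflip.symm (S7.wclass_of_mem (S7.flipDu dl) hN)
end
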